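/- arXiv:1511.00003 — 6 statements merged into one kernel-verified Lean document; each statement's English description precedes it below -/
import Mathlib

section
/- Let V be a coercive regular potential. For ε > 0 let μ^ε be the probability measure on ℝ with density e^{−(2/ε)V(x)}/M^ε with respect to Lebesgue measure, where M^ε = ∫_ℝ e^{−(2/ε)V(z)} dz, and let 𝒩^ε be the Normal distribution with mean 0 and variance ε/(2V''(0)). Then lim_{ε→0} ‖μ^ε − 𝒩^ε‖ = 0, where ‖·‖ denotes the total variation distance. -/
open Filter MeasureTheory ProbabilityTheory

set_option maxHeartbeats 1000000

/-- Second-order upper bound from a bound on the second derivative. -/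
lemma sq_upper (f : ℝ → ℝ) (hf1 : Differentiable ℝ f) (hf2 : Differentiable ℝ (deriv f))
    (h0 : f 0 = 0) (h0' : deriv f 0 = 0) (c r : ℝ)
    (hc : ∀ t ∈ Set.Icc (-r) r, deriv (deriv f) t ≤ c) :
    ∀ x ∈ Set.Icc (-r) r, f x ≤ c * x ^ 2 / 2 := by
  intro x hx
  have hr : 0 ≤ r := by
    rcases hx with ⟨h1, h2⟩; linarith
  set p : ℝ → ℝ := fun t => c * t - deriv f t with hp
  have hpd : ∀ t, HasDerivAt p (c - deriv (deriv f) t) t := by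
    intro t
    have h1 : HasDerivAt (fun t : ℝ => c * t) c t := by
      simpa using (hasDerivAt_id t).const_mul c
    exact h1.sub (hf2 t).hasDerivAt
  have hpmono : MonotoneOn p (Set.Icc (-r) r) := by
    apply monotoneOn_of_deriv_nonneg (convex_Icc _ _)
    · exact (Continuous.continuousOn (by continuity : Continuous fun t : ℝ => c * t)).sub
        (hf2.continuous.continuousOn)
    · intro t ht
      exact ((hpd t).differentiableAt).differentiableWithinAt
    · intro t ht
      rw [interior_Icc] at ht
      rw [(hpd t).deriv]
      have := hc t ⟨ht.1.le, ht.2.le⟩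
      linarith
  have hp0 : p 0 = 0 := by simp [hp, h0']
  set q : ℝ → ℝ := fun t => c * t ^ 2 / 2 - f t with hq
  have hqd : ∀ t, HasDerivAt q (p t) t := by
    intro t
    have h1 : HasDerivAt (fun t : ℝ => c * t ^ 2 / 2) (c * t) t := by
      have h2 := ((hasDerivAt_pow 2 t).const_mul (c / 2))
      have e1 : (fun t : ℝ => c * t ^ 2 / 2) = fun y : ℝ => c / 2 * y ^ 2 := by
        ext y; ring
      have e2 : c * t = c / 2 * ((2 : ℕ) * t ^ (2 - 1)) := by push_cast; ring
      rw [e1, e2]; exact h2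
    have := h1.sub (hf1 t).hasDerivAt
    exact this
  have h0mem : (0 : ℝ) ∈ Set.Icc (-r) r := by constructor <;> linarith
  have key : q 0 ≤ q x := by
    rcases le_or_gt 0 x with hx0 | hx0
    · have hmono : MonotoneOn q (Set.Icc 0 r) := by
        apply monotoneOn_of_deriv_nonneg (convex_Icc _ _)
        · exact Continuous.continuousOn (by
            exact ((continuous_const.mul (continuous_pow 2)).div_const 2).sub hf1.continuous)
        · intro t ht; exact (hqd t).differentiableAt.differentiableWithinAt
        · intro t ht
          rw [interior_Icc] at ht
          rw [(hqd t).deriv, ← hp0]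
          exact hpmono h0mem ⟨by linarith [ht.1], ht.2.le⟩ ht.1.le
      exact hmono ⟨le_refl 0, hr⟩ ⟨hx0, hx.2⟩ hx0
    · have hanti : AntitoneOn q (Set.Icc (-r) 0) := by
        apply antitoneOn_of_deriv_nonpos (convex_Icc _ _)
        · exact Continuous.continuousOn (by
            exact ((continuous_const.mul (continuous_pow 2)).div_const 2).sub hf1.continuous)
        · intro t ht; exact (hqd t).differentiableAt.differentiableWithinAt
        · intro t ht
          rw [interior_Icc] at ht
          rw [(hqd t).deriv, ← hp0]
          exact hpmono ⟨ht.1.le, by linarith [ht.2]⟩ h0mem ht.2.le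
      exact hanti ⟨hx.1, hx0.le⟩ ⟨by linarith, le_refl 0⟩ hx0.le
  have hq0 : q 0 = 0 := by simp [hq, h0]
  rw [hq0] at key
  simp only [hq] at key
  linarith

/-- Second-order lower bound from a bound on the second derivative. -/
lemma sq_lower (f : ℝ → ℝ) (hf1 : Differentiable ℝ f) (hf2 : Differentiable ℝ (deriv f))
    (h0 : f 0 = 0) (h0' : deriv f 0 = 0) (c r : ℝ)
    (hc : ∀ t ∈ Set.Icc (-r) r, c ≤ deriv (deriv f) t) :
    ∀ x ∈ Set.Icc (-r) r, c * x ^ 2 / 2 ≤ f x := by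
  have hneg : deriv (fun x => -f x) = fun x => -deriv f x := by
    ext x; exact deriv.neg
  have hneg2 : ∀ t, deriv (deriv (fun x => -f x)) t = -deriv (deriv f) t := by
    intro t; rw [hneg]
    exact deriv.neg
  have := sq_upper (fun x => -f x) hf1.neg (by rw [hneg]; exact hf2.neg)
    (by simp [h0]) (by rw [hneg]; simp [h0']) (-c) r
    (fun t ht => by rw [hneg2]; linarith [hc t ht])
  intro x hx
  have := this x hx
  simp only [neg_mul] at this
  linarith

noncomputable def tvDist (P Q : Measure ℝ) : ℝ :=
  ⨆ A : {s : Set ℝ // MeasurableSet s}, |(P A.1).toReal - (Q A.1).toReal|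

/-- For a coercive regular potential `V`, the Gibbs measure
`μ^ε(dx) = e^{-(2/ε)V(x)} dx / M^ε` converges in total variation, as `ε → 0⁺`,
to the Gaussian `N(0, ε/(2V''(0)))`. -/
theorem gibbs_measure_tendsto_gaussian
    (V : ℝ → ℝ) (δ : ℝ)
    (hV : ContDiff ℝ 3 V)
    (hV0 : V 0 = 0)
    (hcrit : ∀ x : ℝ, deriv V x = 0 ↔ x = 0)
    (hV''0 : 0 < deriv (deriv V) 0)
    (hcoercive : Tendsto V (Filter.cocompact ℝ) atTop)
    (hδ : 0 < δ)
    (hconvex : ∀ x : ℝ, δ ≤ deriv (deriv V) x) :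
    Tendsto
      (fun ε : ℝ =>
        tvDist
          (volume.withDensity fun x : ℝ =>
            ENNReal.ofReal
              (Real.exp (-(2 / ε) * V x) / ∫ z : ℝ, Real.exp (-(2 / ε) * V z)))
          (gaussianReal 0 (ε / (2 * deriv (deriv V) 0)).toNNReal))
      (nhdsWithin 0 (Set.Ioi 0)) (nhds 0) := by
  -- basic smoothness facts
  have hsm : Differentiable ℝ V ∧ Differentiable ℝ (deriv V) ∧
      Continuous (deriv (deriv V)) := by
    have h3 : ContDiff ℝ ((2 : ℕ) + 1) V := by exact_mod_cast hV
    rw [contDiff_succ_iff_deriv] at h3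
    obtain ⟨hd1, -, h2⟩ := h3
    have h2' : ContDiff ℝ ((1 : ℕ) + 1) (deriv V) := by exact_mod_cast h2
    rw [contDiff_succ_iff_deriv] at h2'
    obtain ⟨hd2, -, h1⟩ := h2'
    exact ⟨hd1, hd2, h1.continuous⟩
  obtain ⟨hd1, hd2, hcont2⟩ := hsm
  have hVcont : Continuous V := hd1.continuous
  have hV'0 : deriv V 0 = 0 := (hcrit 0).mpr rfl
  set a : ℝ := deriv (deriv V) 0 with ha_def
  have ha : 0 < a := hV''0
  -- global lower bound  V x ≥ δ x² / 2
  have hlow : ∀ x : ℝ, δ / 2 * x ^ 2 ≤ V x := by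
    intro x
    have := sq_lower V hd1 hd2 hV0 hV'0 δ |x|
      (fun t _ => hconvex t) x ⟨neg_abs_le x, le_abs_self x⟩
    linarith
  -- Taylor-type two-sided bound near 0
  have htaylor : ∀ η : ℝ, 0 < η → ∃ r : ℝ, 0 < r ∧
      ∀ x : ℝ, |x| ≤ r → |V x - a * x ^ 2 / 2| ≤ η * x ^ 2 / 2 := by
    intro η hη
    have hct : ContinuousAt (deriv (deriv V)) 0 := hcont2.continuousAt
    rw [Metric.continuousAt_iff] at hct
    obtain ⟨r, hr, hball⟩ := hct η hη
    refine ⟨r / 2, by linarith, fun x hx => ?_⟩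
    have hmem : x ∈ Set.Icc (-(r / 2)) (r / 2) := abs_le.mp hx
    have hball' : ∀ t ∈ Set.Icc (-(r / 2)) (r / 2),
        |deriv (deriv V) t - a| < η := by
      intro t ht
      have : dist t 0 < r := by
        rw [Real.dist_eq, sub_zero]
        have := abs_le.mpr ht
        linarith [abs_le.mpr ht]
      simpa [Real.dist_eq, ha_def] using hball this
    have hup := sq_upper V hd1 hd2 hV0 hV'0 (a + η) (r / 2)
      (fun t ht => by linarith [(abs_lt.mp (hball' t ht)).2]) x hmem
    have hlo := sq_lower V hd1 hd2 hV0 hV'0 (a - η) (r / 2)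
      (fun t ht => by linarith [(abs_lt.mp (hball' t ht)).1]) x hmem
    rw [abs_le]
    constructor <;> nlinarith [sq_nonneg x]
  -- pointwise limit of the rescaled exponent
  have hptlim : ∀ y : ℝ, Tendsto (fun ε : ℝ => (2 / ε) * V (Real.sqrt ε * y))
      (nhdsWithin 0 (Set.Ioi 0)) (nhds (a * y ^ 2)) := by
    intro y
    rcases eq_or_ne y 0 with rfl | hy
    · simp only [mul_zero, hV0]
      simp only [ne_eq, OfNat.ofNat_ne_zero, not_false_eq_true, zero_pow, mul_zero]
      exact tendsto_const_nhds
    have hy2 : 0 < y ^ 2 := by positivity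
    rw [Metric.tendsto_nhdsWithin_nhds]
    intro η hη
    obtain ⟨r, hr, hb⟩ := htaylor (η / (2 * y ^ 2)) (by positivity)
    refine ⟨(r / |y|) ^ 2, by positivity, fun ε hε hd => ?_⟩
    have hε' : 0 < ε := hε
    rw [Real.dist_eq, sub_zero, abs_of_pos hε'] at hd
    have hsq : Real.sqrt ε < r / |y| := by
      have := Real.sqrt_lt_sqrt hε'.le hd
      rwa [Real.sqrt_sq (by positivity)] at this
    have hxr : |Real.sqrt ε * y| ≤ r := by
      rw [abs_mul, abs_of_nonneg (Real.sqrt_nonneg ε)]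
      rw [div_eq_mul_inv] at hsq
      have hyabs : 0 < |y| := abs_pos.mpr hy
      calc Real.sqrt ε * |y| ≤ r * |y|⁻¹ * |y| := by
            apply mul_le_mul_of_nonneg_right hsq.le hyabs.le
        _ = r := by field_simp
    have hx2 : (Real.sqrt ε * y) ^ 2 = ε * y ^ 2 := by
      rw [mul_pow, Real.sq_sqrt hε'.le]
    have hbb := hb (Real.sqrt ε * y) hxr
    rw [Real.dist_eq]
    have he : 2 / ε * V (Real.sqrt ε * y) - a * y ^ 2
        = (2 / ε) * (V (Real.sqrt ε * y) - a * (Real.sqrt ε * y) ^ 2 / 2) := by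
      rw [hx2]; field_simp
    rw [he, abs_mul, abs_of_pos (by positivity : (0:ℝ) < 2 / ε)]
    have : 2 / ε * |V (Real.sqrt ε * y) - a * (Real.sqrt ε * y) ^ 2 / 2|
        ≤ 2 / ε * (η / (2 * y ^ 2) * (Real.sqrt ε * y) ^ 2 / 2) := by
      apply mul_le_mul_of_nonneg_left hbb (by positivity)
    have heq : 2 / ε * (η / (2 * y ^ 2) * (Real.sqrt ε * y) ^ 2 / 2) = η / 2 := by
      rw [hx2]; field_simp
    rw [heq] at this
    linarith
  -- pointwise comparison with a Gaussian
  have hexp_le : ∀ ε : ℝ, 0 < ε → ∀ x : ℝ,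
      Real.exp (-(2 / ε) * V x) ≤ Real.exp (-(δ / ε) * x ^ 2) := by
    intro ε hε x
    apply Real.exp_le_exp.mpr
    have hl := hlow x
    have h2ε : (0:ℝ) < 2 / ε := by positivity
    rw [neg_mul, neg_mul, neg_le_neg_iff]
    calc δ / ε * x ^ 2 = 2 / ε * (δ / 2 * x ^ 2) := by field_simp
      _ ≤ 2 / ε * V x := mul_le_mul_of_nonneg_left hl h2ε.le
  have hint : ∀ ε : ℝ, 0 < ε →
      Integrable (fun x : ℝ => Real.exp (-(2 / ε) * V x)) := by
    intro ε hε
    apply (integrable_exp_neg_mul_sq (show (0:ℝ) < δ / ε by positivity)).mono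
    · have : Continuous (fun x : ℝ => Real.exp (-(2 / ε) * V x)) := by fun_prop
      exact this.aestronglyMeasurable
    · refine Filter.Eventually.of_forall fun x => ?_
      rw [Real.norm_eq_abs, Real.norm_eq_abs, abs_of_pos (Real.exp_pos _),
        abs_of_pos (Real.exp_pos _)]
      exact hexp_le ε hε x
  have hIpos : ∀ ε : ℝ, 0 < ε → 0 < ∫ z : ℝ, Real.exp (-(2 / ε) * V z) := by
    intro ε hε
    rw [integral_pos_iff_support_of_nonneg (fun x => (Real.exp_pos _).le) (hint ε hε)]
    have hsup : Function.support (fun x : ℝ => Real.exp (-(2 / ε) * V x)) = Set.univ :=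
      Set.eq_univ_iff_forall.mpr fun x => (Real.exp_pos _).ne'
    rw [hsup]
    simp
  -- change of variables
  have hcvar : ∀ ε : ℝ, 0 < ε → ∀ h : ℝ → ℝ,
      ∫ x : ℝ, h x = Real.sqrt ε * ∫ y : ℝ, h (Real.sqrt ε * y) := by
    intro ε hε h
    have hs : 0 < Real.sqrt ε := Real.sqrt_pos.mpr hε
    rw [MeasureTheory.Measure.integral_comp_mul_left h (Real.sqrt ε), smul_eq_mul,
      abs_of_pos (inv_pos.mpr hs)]
    field_simp
  -- the rescaled unnormalized density
  have hGle : ∀ ε : ℝ, 0 < ε → ∀ y : ℝ,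
      Real.exp (-(2 / ε) * V (Real.sqrt ε * y)) ≤ Real.exp (-δ * y ^ 2) := by
    intro ε hε y
    refine le_trans (hexp_le ε hε _) (le_of_eq ?_)
    have hx2 : (Real.sqrt ε * y) ^ 2 = ε * y ^ 2 := by
      rw [mul_pow, Real.sq_sqrt hε.le]
    rw [hx2]
    congr 1
    field_simp
  have hGlim : ∀ y : ℝ,
      Tendsto (fun ε : ℝ => Real.exp (-(2 / ε) * V (Real.sqrt ε * y)))
        (nhdsWithin 0 (Set.Ioi 0)) (nhds (Real.exp (-a * y ^ 2))) := by
    intro y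
    have h1 := (hptlim y).neg
    have h2 := (Real.continuous_exp.continuousAt.tendsto.comp
      (h1 : Tendsto _ _ (nhds (-(a * y ^ 2)))))
    simp only [Function.comp_def] at h2
    convert h2 using 2 with ε
    · rw [neg_mul]
    · rw [neg_mul]
  have hGcont : ∀ ε : ℝ, Continuous fun y : ℝ =>
      Real.exp (-(2 / ε) * V (Real.sqrt ε * y)) := by
    intro ε
    fun_prop
  have hJlim : Tendsto (fun ε : ℝ => ∫ y : ℝ, Real.exp (-(2 / ε) * V (Real.sqrt ε * y)))
      (nhdsWithin 0 (Set.Ioi 0)) (nhds (Real.sqrt (Real.pi / a))) := by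
    have := MeasureTheory.tendsto_integral_filter_of_dominated_convergence
      (μ := volume) (l := nhdsWithin 0 (Set.Ioi 0))
      (F := fun ε y => Real.exp (-(2 / ε) * V (Real.sqrt ε * y)))
      (f := fun y => Real.exp (-a * y ^ 2))
      (bound := fun y => Real.exp (-δ * y ^ 2))
      (Filter.Eventually.of_forall fun ε => (hGcont ε).aestronglyMeasurable)
      (by
        filter_upwards [self_mem_nhdsWithin] with ε hε
        refine Filter.Eventually.of_forall fun y => ?_
        rw [Real.norm_eq_abs, abs_of_pos (Real.exp_pos _)]
        exact hGle ε hε y)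
      (integrable_exp_neg_mul_sq hδ)
      (Filter.Eventually.of_forall fun y => hGlim y)
    rwa [integral_gaussian a] at this
  have hsqrtpa : (0:ℝ) < Real.sqrt (Real.pi / a) := Real.sqrt_pos.mpr (by positivity)
  have hKlim : Tendsto (fun ε : ℝ => Real.sqrt ε / ∫ z : ℝ, Real.exp (-(2 / ε) * V z))
      (nhdsWithin 0 (Set.Ioi 0)) (nhds (Real.sqrt (a / Real.pi))) := by
    have h1 := hJlim.inv₀ hsqrtpa.ne'
    have h2 : (Real.sqrt (Real.pi / a))⁻¹ = Real.sqrt (a / Real.pi) := by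
      rw [← Real.sqrt_inv, inv_div]
    rw [h2] at h1
    apply h1.congr'
    filter_upwards [self_mem_nhdsWithin] with ε hε
    have hε' : (0:ℝ) < ε := hε
    have hIJ := hcvar ε hε' (fun x => Real.exp (-(2 / ε) * V x))
    have hs : 0 < Real.sqrt ε := Real.sqrt_pos.mpr hε'
    have hJpos : 0 < ∫ y : ℝ, Real.exp (-(2 / ε) * V (Real.sqrt ε * y)) := by
      have hIp := hIpos ε hε'
      rw [hIJ] at hIp
      rcases mul_pos_iff.mp hIp with ⟨-, h⟩ | ⟨h, -⟩
      · exact h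
      · linarith
    rw [hIJ, div_mul_eq_div_div, div_self hs.ne', one_div]
  have hKev : ∀ᶠ ε in nhdsWithin 0 (Set.Ioi 0),
      (Real.sqrt ε / ∫ z : ℝ, Real.exp (-(2 / ε) * V z)) ≤ Real.sqrt (a / Real.pi) + 1 :=
    hKlim.eventually (eventually_le_nhds (lt_add_one _))
  have hHlim : Tendsto (fun ε : ℝ => ∫ y : ℝ,
      |Real.sqrt ε / (∫ z : ℝ, Real.exp (-(2 / ε) * V z))
          * Real.exp (-(2 / ε) * V (Real.sqrt ε * y))
        - Real.sqrt (a / Real.pi) * Real.exp (-a * y ^ 2)|)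
      (nhdsWithin 0 (Set.Ioi 0)) (nhds 0) := by
    have hDCT := MeasureTheory.tendsto_integral_filter_of_dominated_convergence
      (μ := volume) (l := nhdsWithin 0 (Set.Ioi 0))
      (F := fun (ε : ℝ) (y : ℝ) =>
        |Real.sqrt ε / (∫ z : ℝ, Real.exp (-(2 / ε) * V z))
            * Real.exp (-(2 / ε) * V (Real.sqrt ε * y))
          - Real.sqrt (a / Real.pi) * Real.exp (-a * y ^ 2)|)
      (f := fun _ : ℝ => (0:ℝ))
      (bound := fun y => (Real.sqrt (a / Real.pi) + 1) * Real.exp (-δ * y ^ 2)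
        + Real.sqrt (a / Real.pi) * Real.exp (-a * y ^ 2))
      ?_ ?_ ?_ ?_
    · simpa using hDCT
    · refine Filter.Eventually.of_forall fun ε => ?_
      have : Continuous fun y : ℝ =>
          |Real.sqrt ε / (∫ z : ℝ, Real.exp (-(2 / ε) * V z))
              * Real.exp (-(2 / ε) * V (Real.sqrt ε * y))
            - Real.sqrt (a / Real.pi) * Real.exp (-a * y ^ 2)| := by fun_prop
      exact this.aestronglyMeasurable
    · filter_upwards [hKev, self_mem_nhdsWithin] with ε h1 h2
      refine Filter.Eventually.of_forall fun y => ?_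
      have hε' : (0:ℝ) < ε := h2
      have hc : 0 ≤ Real.sqrt ε / ∫ z : ℝ, Real.exp (-(2 / ε) * V z) :=
        div_nonneg (Real.sqrt_nonneg ε) (hIpos ε hε').le
      rw [Real.norm_eq_abs, abs_abs]
      calc |Real.sqrt ε / (∫ z : ℝ, Real.exp (-(2 / ε) * V z))
              * Real.exp (-(2 / ε) * V (Real.sqrt ε * y))
            - Real.sqrt (a / Real.pi) * Real.exp (-a * y ^ 2)|
          ≤ |Real.sqrt ε / (∫ z : ℝ, Real.exp (-(2 / ε) * V z))
              * Real.exp (-(2 / ε) * V (Real.sqrt ε * y))|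
            + |Real.sqrt (a / Real.pi) * Real.exp (-a * y ^ 2)| := abs_sub _ _
        _ ≤ (Real.sqrt (a / Real.pi) + 1) * Real.exp (-δ * y ^ 2)
            + Real.sqrt (a / Real.pi) * Real.exp (-a * y ^ 2) := by
            apply add_le_add
            · rw [abs_of_nonneg (mul_nonneg hc (Real.exp_pos _).le)]
              exact mul_le_mul h1 (hGle ε hε' y) (Real.exp_pos _).le (by positivity)
            · rw [abs_of_nonneg (mul_nonneg (Real.sqrt_nonneg _) (Real.exp_pos _).le)]
    · exact ((integrable_exp_neg_mul_sq hδ).const_mul _).add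
        ((integrable_exp_neg_mul_sq ha).const_mul _)
    · refine Filter.Eventually.of_forall fun y => ?_
      have h1 := ((hKlim.mul (hGlim y)).sub
        (tendsto_const_nhds (x := Real.sqrt (a / Real.pi) * Real.exp (-a * y ^ 2)))).abs
      simpa using h1
  -- total variation bound for each ε > 0
  have hTV : ∀ ε : ℝ, 0 < ε →
      tvDist
        (volume.withDensity fun x : ℝ => ENNReal.ofReal
          (Real.exp (-(2 / ε) * V x) / ∫ z : ℝ, Real.exp (-(2 / ε) * V z)))
        (gaussianReal 0 (ε / (2 * a)).toNNReal)
      ≤ ∫ y : ℝ, |Real.sqrt ε / (∫ z : ℝ, Real.exp (-(2 / ε) * V z))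
          * Real.exp (-(2 / ε) * V (Real.sqrt ε * y))
        - Real.sqrt (a / Real.pi) * Real.exp (-a * y ^ 2)| := by
    intro ε hε
    have hs : 0 < Real.sqrt ε := Real.sqrt_pos.mpr hε
    set I : ℝ := ∫ z : ℝ, Real.exp (-(2 / ε) * V z) with hI
    have hIpos' : 0 < I := hIpos ε hε
    set v : NNReal := (ε / (2 * a)).toNNReal with hv
    have hvR : (v : ℝ) = ε / (2 * a) := Real.coe_toNNReal _ (by positivity)
    have hvne : v ≠ 0 := by
      intro h
      rw [h] at hvR
      have : (0:ℝ) < ε / (2 * a) := by positivity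
      rw [← hvR] at this
      simp at this
    set f : ℝ → ℝ := fun x => Real.exp (-(2 / ε) * V x) / I with hf
    set g : ℝ → ℝ := fun x => gaussianPDFReal 0 v x with hg
    have hfint : Integrable f := (hint ε hε).div_const I
    have hgint : Integrable g := integrable_gaussianPDFReal 0 v
    have hfgint : Integrable (fun x => |f x - g x|) := (hfint.sub hgint).abs
    have hgauss : ∀ y : ℝ, Real.sqrt ε * g (Real.sqrt ε * y)
        = Real.sqrt (a / Real.pi) * Real.exp (-a * y ^ 2) := by
      intro y
      rw [hg]
      simp only [gaussianPDFReal, sub_zero]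
      have hxx : (Real.sqrt ε * y) ^ 2 = ε * y ^ 2 := by
        rw [mul_pow, Real.sq_sqrt hε.le]
      have hexp : -(Real.sqrt ε * y) ^ 2 / (2 * (v:ℝ)) = -a * y ^ 2 := by
        rw [hxx, hvR]
        field_simp
      have hcoef : Real.sqrt ε * (Real.sqrt (2 * Real.pi * (v:ℝ)))⁻¹
          = Real.sqrt (a / Real.pi) := by
        have h2 : 2 * Real.pi * (v:ℝ) = ε * (Real.pi / a) := by
          rw [hvR]; field_simp
        rw [h2, Real.sqrt_mul hε.le, mul_inv, ← mul_assoc,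
          mul_inv_cancel₀ hs.ne', one_mul, ← Real.sqrt_inv, inv_div]
      rw [hexp, ← mul_assoc, hcoef]
    have hEq : ∀ y : ℝ, Real.sqrt ε * |f (Real.sqrt ε * y) - g (Real.sqrt ε * y)|
        = |Real.sqrt ε / I * Real.exp (-(2 / ε) * V (Real.sqrt ε * y))
            - Real.sqrt (a / Real.pi) * Real.exp (-a * y ^ 2)| := by
      intro y
      have h1 : Real.sqrt ε * |f (Real.sqrt ε * y) - g (Real.sqrt ε * y)|
          = |Real.sqrt ε * (f (Real.sqrt ε * y) - g (Real.sqrt ε * y))| := by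
        rw [abs_mul, abs_of_nonneg (Real.sqrt_nonneg ε)]
      rw [h1, mul_sub, hgauss y]
      congr 2
      rw [hf]
      ring
    have hchg : (∫ x : ℝ, |f x - g x|)
        = ∫ y : ℝ, |Real.sqrt ε / I * Real.exp (-(2 / ε) * V (Real.sqrt ε * y))
            - Real.sqrt (a / Real.pi) * Real.exp (-a * y ^ 2)| := by
      rw [hcvar ε hε (fun x => |f x - g x|), ← MeasureTheory.integral_const_mul]
      exact integral_congr_ae (Filter.Eventually.of_forall fun y => hEq y)
    refine Real.iSup_le ?_ (integral_nonneg fun y => abs_nonneg _)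
    rintro ⟨A, hA⟩
    rw [← hchg]
    have hPA : ((volume.withDensity fun x : ℝ => ENNReal.ofReal
        (Real.exp (-(2 / ε) * V x) / I)) A).toReal = ∫ x in A, f x := by
      rw [withDensity_apply _ hA,
        MeasureTheory.integral_eq_lintegral_of_nonneg_ae
          (ae_of_all _ fun x => div_nonneg (Real.exp_pos _).le hIpos'.le)
          (Continuous.aestronglyMeasurable (by fun_prop)).restrict]
    have hQA : ((gaussianReal 0 v) A).toReal = ∫ x in A, g x := by
      rw [gaussianReal_apply_eq_integral 0 hvne A,
        ENNReal.toReal_ofReal (integral_nonneg fun x => gaussianPDFReal_nonneg 0 v x)]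
    rw [hPA, hQA]
    calc |(∫ x in A, f x) - ∫ x in A, g x| = |∫ x in A, (f x - g x)| := by
          rw [integral_sub hfint.integrableOn hgint.integrableOn]
      _ ≤ ∫ x in A, |f x - g x| := by
          simpa [Real.norm_eq_abs] using
            norm_integral_le_integral_norm (μ := volume.restrict A) (f := fun x => f x - g x)
      _ ≤ ∫ x, |f x - g x| :=
          setIntegral_le_integral hfgint (ae_of_all _ fun x => abs_nonneg _)
  -- conclusion by squeezing
  refine squeeze_zero' (Filter.Eventually.of_forall fun ε =>
    Real.iSup_nonneg fun A => abs_nonneg _) ?_ hHlim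
  filter_upwards [self_mem_nhdsWithin] with ε hε
  exact hTV ε hε
end

section
/- Let V be a coercive regular potential, with δ > 0 such that V''(x) ≥ δ for all x ∈ ℝ. Then for every M ∈ (0, +∞) there exists a smooth coercive regular potential V_M such that V_M(x) = V(x) for every |x| ≤ √2 M; that is, there exists V_M : ℝ → ℝ of class C³ with V_M(0) = 0, V_M'' (x) ≥ δ for every x ∈ ℝ, sup_{x∈ℝ} |V_M''(x)| < +∞, sup_{x∈ℝ} |V_M'''(x)| < +∞, and V_M(x) = V(x) whenever |x| ≤ √2 M. -/
open Filter

/-- Auxiliary: a continuous function that is constant outside a compact interval has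
bounded absolute value. -/
lemma bdd_of_eventually_const (F : ℝ → ℝ) (hF : Continuous F) (K c : ℝ)
    (h : ∀ x : ℝ, K ≤ |x| → F x = c) :
    BddAbove (Set.range fun x : ℝ => |F x|) := by
  obtain ⟨B, hB⟩ := (isCompact_Icc (a := -K) (b := K)).bddAbove_image
    (hF.abs.continuousOn)
  refine ⟨max B |c|, ?_⟩
  rintro y ⟨x, rfl⟩
  by_cases hx : |x| ≤ K
  · exact le_trans (hB ⟨x, abs_le.mp hx, rfl⟩) (le_max_left _ _)
  · show |F x| ≤ _
    rw [h x (le_of_lt (lt_of_not_ge hx))]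
    exact le_max_right _ _

lemma abs_le_of_mem_uIcc {s x : ℝ} (hs : s ∈ Set.uIcc 0 x) : |s| ≤ |x| := by
  rcases Set.mem_uIcc.mp hs with ⟨h1, h2⟩ | ⟨h1, h2⟩
  · rw [abs_of_nonneg h1]; exact h2.trans (le_abs_self x)
  · rw [abs_of_nonpos h2]; linarith [neg_abs_le x]

/-- A coercive regular potential `V` (with `V'' ≥ δ > 0`) can be
modified outside `[-√2 M, √2 M]` to a smooth coercive regular potential `V_M`:
`V_M` is C³, `V_M 0 = 0`, `V_M'' ≥ δ` everywhere, `V_M''` and `V_M'''` are bounded,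
and `V_M = V` on `{x : |x| ≤ √2 M}`. -/
theorem exists_smooth_coercive_approximation
    (V : ℝ → ℝ) (δ : ℝ)
    (hV : ContDiff ℝ 3 V)
    (hV0 : V 0 = 0)
    (hcrit : ∀ x : ℝ, deriv V x = 0 ↔ x = 0)
    (hV''0 : 0 < deriv (deriv V) 0)
    (hcoercive : Tendsto V (Filter.cocompact ℝ) atTop)
    (hδ : 0 < δ)
    (hconvex : ∀ x : ℝ, δ ≤ deriv (deriv V) x) :
    ∀ M : ℝ, 0 < M →
      ∃ VM : ℝ → ℝ,
        ContDiff ℝ 3 VM ∧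
        VM 0 = 0 ∧
        (∀ x : ℝ, δ ≤ deriv (deriv VM) x) ∧
        BddAbove (Set.range fun x : ℝ => |deriv (deriv VM) x|) ∧
        BddAbove (Set.range fun x : ℝ => |deriv (deriv (deriv VM)) x|) ∧
        (∀ x : ℝ, |x| ≤ Real.sqrt 2 * M → VM x = V x) := by
  intro M hM
  set R : ℝ := Real.sqrt 2 * M with hRdef
  set W : ℝ → ℝ := deriv (deriv V) with hWdef
  -- regularity of W
  have hV' : ContDiff ℝ ((1 + 2 : ℕ) : WithTop ℕ∞) V := by exact_mod_cast hV
  have hW1 : ContDiff ℝ 1 W := by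
    have := ContDiff.iterate_deriv' 1 2 hV'
    exact_mod_cast this
  have hWc : Continuous W := hW1.continuous
  -- cutoff function
  set φ : ℝ → ℝ := fun x => Real.smoothTransition (x ^ 2 - R ^ 2) with hφdef
  have hφ1 : ContDiff ℝ 1 φ := by
    have h1 : ContDiff ℝ 1 (fun x : ℝ => x ^ 2 - R ^ 2) :=
      (contDiff_id.pow 2).sub contDiff_const
    exact Real.smoothTransition.contDiff.comp h1
  have hφ0 : ∀ x : ℝ, |x| ≤ R → φ x = 0 := by
    intro x hx
    apply Real.smoothTransition.zero_of_nonpos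
    have h1 : -R ≤ x ∧ x ≤ R := abs_le.mp hx
    nlinarith [h1.1, h1.2]
  have hφone : ∀ x : ℝ, R ^ 2 + 1 ≤ x ^ 2 → φ x = 1 := by
    intro x hx
    apply Real.smoothTransition.one_of_one_le
    linarith
  -- the modified second derivative
  set g : ℝ → ℝ := fun x => W x + φ x * (δ - W x) with hgdef
  have hg1 : ContDiff ℝ 1 g := hW1.add (hφ1.mul (contDiff_const.sub hW1))
  have hgc : Continuous g := hg1.continuous
  have hgδ : ∀ x : ℝ, δ ≤ g x := by
    intro x
    have h1 := Real.smoothTransition.nonneg (x ^ 2 - R ^ 2)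
    have h2 := Real.smoothTransition.le_one (x ^ 2 - R ^ 2)
    have h3 := hconvex x
    simp only [hgdef]
    nlinarith
  have hgeq : ∀ x : ℝ, |x| ≤ R → g x = W x := by
    intro x hx
    simp [hgdef, hφ0 x hx]
  set K : ℝ := Real.sqrt (R ^ 2 + 1) with hKdef
  have hgconst : ∀ x : ℝ, K ≤ |x| → g x = δ := by
    intro x hx
    have hx2 : R ^ 2 + 1 ≤ x ^ 2 := by
      have h1 : K ^ 2 ≤ |x| ^ 2 := pow_le_pow_left₀ (Real.sqrt_nonneg _) hx 2
      rw [hKdef, Real.sq_sqrt (by positivity)] at h1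
      rwa [sq_abs] at h1
    simp [hgdef, hφone x hx2]
  -- the primitives
  set h : ℝ → ℝ := fun t => ∫ s in (0:ℝ)..t, g s with hhdef
  have hdh : ∀ t : ℝ, HasDerivAt h (g t) t := fun t =>
    (hgc.integral_hasStrictDerivAt 0 t).hasDerivAt
  have hhdiff : Differentiable ℝ h := fun t => (hdh t).differentiableAt
  have hhc : Continuous h := hhdiff.continuous
  set VM : ℝ → ℝ := fun x => ∫ t in (0:ℝ)..x, h t with hVMdef
  have hdVM : ∀ x : ℝ, HasDerivAt VM (h x) x := fun x =>
    (hhc.integral_hasStrictDerivAt 0 x).hasDerivAt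
  have hderivVM : deriv VM = h := funext fun x => (hdVM x).deriv
  have hderivh : deriv h = g := funext fun t => (hdh t).deriv
  have hVM'' : deriv (deriv VM) = g := by rw [hderivVM, hderivh]
  have hVM''' : deriv (deriv (deriv VM)) = deriv g := by rw [hVM'']
  -- smoothness of VM
  have hVM3 : ContDiff ℝ 3 VM := by
    rw [show (3 : WithTop ℕ∞) = 2 + 1 by norm_num]
    refine contDiff_succ_iff_deriv.mpr
      ⟨fun x => (hdVM x).differentiableAt, ?_, ?_⟩
    · intro h2; exact absurd h2 (by simp)
    · rw [hderivVM, show (2 : WithTop ℕ∞) = 1 + 1 by norm_num]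
      refine contDiff_succ_iff_deriv.mpr
        ⟨fun t => (hdh t).differentiableAt, ?_, ?_⟩
      · intro h2; exact absurd h2 (by simp)
      · rw [hderivh]; exact hg1
  -- boundedness of the third derivative: deriv g vanishes for |x| ≥ K + 1
  have hdg0 : ∀ x : ℝ, K + 1 ≤ |x| → deriv g x = 0 := by
    intro x hx
    have hK0 : 0 ≤ K := Real.sqrt_nonneg _
    have hopen : IsOpen {y : ℝ | K < |y|} := by
      have : {y : ℝ | K < |y|} = (fun y : ℝ => |y|) ⁻¹' (Set.Ioi K) := rfl
      rw [this]; exact isOpen_Ioi.preimage continuous_abs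
    have hmem : x ∈ {y : ℝ | K < |y|} := by
      simp only [Set.mem_setOf_eq]; linarith
    have heq : g =ᶠ[nhds x] fun _ => δ := by
      filter_upwards [hopen.mem_nhds hmem] with y hy
      exact hgconst y (le_of_lt hy)
    rw [heq.deriv_eq, deriv_const]
  have hdgc : Continuous (deriv g) := hg1.continuous_deriv le_rfl
  -- FTC identities giving VM = V on [-R, R]
  have hVd0 : deriv V 0 = 0 := (hcrit 0).mpr rfl
  have hVdiff : Differentiable ℝ V := hV.differentiable (by norm_num)
  have hV'diff : Differentiable ℝ (deriv V) := by
    have h2 : ContDiff ℝ ((2 : ℕ) : WithTop ℕ∞) (deriv V) := by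
      have := ContDiff.iterate_deriv' 2 1 (by exact_mod_cast hV :
        ContDiff ℝ ((2 + 1 : ℕ) : WithTop ℕ∞) V)
      exact_mod_cast this
    exact h2.differentiable (by norm_num)
  have hV'c : Continuous (deriv V) := hV'diff.continuous
  have hVMeqV : ∀ x : ℝ, |x| ≤ R → VM x = V x := by
    intro x hx
    have hstep : ∀ t ∈ Set.uIcc (0:ℝ) x, h t = deriv V t := by
      intro t ht
      have htR : |t| ≤ R := (abs_le_of_mem_uIcc ht).trans hx
      have h1 : h t = ∫ s in (0:ℝ)..t, W s := by
        apply intervalIntegral.integral_congr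
        intro s hs
        exact hgeq s ((abs_le_of_mem_uIcc hs).trans htR)
      have h2 : ∫ s in (0:ℝ)..t, W s = deriv V t - deriv V 0 := by
        apply intervalIntegral.integral_deriv_eq_sub
        · intro s _
          exact hV'diff s
        · exact hWc.intervalIntegrable 0 t
      rw [h1, h2, hVd0, sub_zero]
    have h3 : VM x = ∫ t in (0:ℝ)..x, deriv V t :=
      intervalIntegral.integral_congr hstep
    have h4 : ∫ t in (0:ℝ)..x, deriv V t = V x - V 0 := by
      apply intervalIntegral.integral_deriv_eq_sub
      · intro t _; exact hVdiff t
      · exact hV'c.intervalIntegrable 0 x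
    rw [h3, h4, hV0, sub_zero]
  refine ⟨VM, hVM3, ?_, ?_, ?_, ?_, ?_⟩
  · simp [hVMdef]
  · intro x; rw [hVM'']; exact hgδ x
  · rw [hVM'']
    exact bdd_of_eventually_const g hgc K δ hgconst
  · rw [hVM''']
    exact bdd_of_eventually_const (deriv g) hdgc (K + 1) 0 hdg0
  · exact hVMeqV
end

section
/- Let V be a coercive regular potential and let V̂ be a smooth coercive regular potential with V̂''(0) = V''(0). For ε > 0 let μ^ε be the probability measure on ℝ with density e^{−(2/ε)V(x)}/M^ε (with M^ε = ∫_ℝ e^{−(2/ε)V(z)} dz) and let μ̂^ε be the probability measure with density e^{−(2/ε)V̂(x)}/M̂^ε (with M̂^ε = ∫_ℝ e^{−(2/ε)V̂(z)} dz). Then lim_{ε→0} ‖μ^ε − μ̂^ε‖ = 0, where ‖·‖ denotes the total variation distance. -/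
open Filter MeasureTheory

set_option linter.unusedVariables false

lemma aux_cd2 {V : ℝ → ℝ} (hV : ContDiff ℝ 3 V) : ContDiff ℝ 2 (deriv V) := by
  have h : ContDiff ℝ (2 + 1 : ℕ) V := by exact_mod_cast hV
  exact (contDiff_succ_iff_deriv.mp h).2.2

lemma aux_cd1 {V : ℝ → ℝ} (hV : ContDiff ℝ 3 V) : ContDiff ℝ 1 (deriv (deriv V)) := by
  have h : ContDiff ℝ (1 + 1 : ℕ) (deriv V) := by exact_mod_cast aux_cd2 hV
  exact (contDiff_succ_iff_deriv.mp h).2.2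

lemma quad_lower {V : ℝ → ℝ} {δ : ℝ} (hV : ContDiff ℝ 3 V) (hV0 : V 0 = 0)
    (hV'0 : deriv V 0 = 0) (hconv : ∀ x, δ ≤ deriv (deriv V) x) (x : ℝ) :
    δ / 2 * x ^ 2 ≤ V x := by
  have hVd : Differentiable ℝ V := hV.differentiable (by norm_num)
  have hV'd : Differentiable ℝ (deriv V) := (aux_cd2 hV).differentiable (by norm_num)
  set g : ℝ → ℝ := fun t => V t - δ / 2 * t ^ 2 with hg_def
  have hg : ∀ t, HasDerivAt g (deriv V t - δ * t) t := by
    intro t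
    have h2 : HasDerivAt (fun s : ℝ => δ / 2 * s ^ 2) (δ * t) t := by
      have := (hasDerivAt_pow 2 t).const_mul (δ / 2)
      exact this.congr_deriv (by push_cast; ring)
    exact ((hVd t).hasDerivAt).sub h2
  have hg' : ∀ t, HasDerivAt (fun s => deriv V s - δ * s) (deriv (deriv V) t - δ) t := by
    intro t
    have h2 : HasDerivAt (fun s : ℝ => δ * s) δ t := by
      simpa using (hasDerivAt_id t).const_mul δ
    exact ((hV'd t).hasDerivAt).sub h2
  have hmono : Monotone (fun s => deriv V s - δ * s) := by
    apply monotone_of_deriv_nonneg (fun t => (hg' t).differentiableAt)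
    intro t
    rw [(hg' t).deriv]
    linarith [hconv t]
  have h0 : deriv V 0 - δ * 0 = 0 := by simp [hV'0]
  have hgc : Continuous g := by
    have := hVd.continuous
    fun_prop
  have hg0 : g 0 = 0 := by simp [hg_def, hV0]
  have key : g 0 ≤ g x := by
    rcases le_total 0 x with hx | hx
    · have hm : MonotoneOn g (Set.Ici 0) := by
        apply monotoneOn_of_deriv_nonneg (convex_Ici 0) hgc.continuousOn
          (fun t _ => (hg t).differentiableAt.differentiableWithinAt)
        intro t ht
        rw [interior_Ici] at ht
        rw [(hg t).deriv]
        have := hmono (le_of_lt ht)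
        simp only at this
        linarith [this, h0]
      exact hm Set.self_mem_Ici hx hx
    · have hm : AntitoneOn g (Set.Iic 0) := by
        apply antitoneOn_of_deriv_nonpos (convex_Iic 0) hgc.continuousOn
          (fun t _ => (hg t).differentiableAt.differentiableWithinAt)
        intro t ht
        rw [interior_Iic] at ht
        rw [(hg t).deriv]
        have := hmono (le_of_lt ht)
        simp only at this
        linarith [this, h0]
      exact hm hx Set.self_mem_Iic hx
  rw [hg0] at key
  simp only [hg_def] at key
  linarith

lemma ratio_tendsto {V : ℝ → ℝ} (hV : ContDiff ℝ 3 V) (hV0 : V 0 = 0)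
    (hV'0 : deriv V 0 = 0) :
    Tendsto (fun x => V x / x ^ 2) (nhdsWithin 0 {(0:ℝ)}ᶜ)
      (nhds (deriv (deriv V) 0 / 2)) := by
  have hVd : Differentiable ℝ V := hV.differentiable (by norm_num)
  have hV'd : Differentiable ℝ (deriv V) := (aux_cd2 hV).differentiable (by norm_num)
  have hslope : Tendsto (slope (deriv V) 0) (nhdsWithin 0 {(0:ℝ)}ᶜ)
      (nhds (deriv (deriv V) 0)) :=
    hasDerivAt_iff_tendsto_slope.mp (hV'd 0).hasDerivAt
  apply deriv.lhopital_zero_nhdsNE (g := fun x : ℝ => x ^ 2)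
  · exact Eventually.of_forall fun x => hVd x
  · filter_upwards [self_mem_nhdsWithin] with x hx
    simp only [deriv_pow_field]
    simpa using hx
  · have : Tendsto V (nhds (0:ℝ)) (nhds (V 0)) := hVd.continuous.tendsto 0
    rw [hV0] at this
    exact this.mono_left nhdsWithin_le_nhds
  · have : Tendsto (fun x : ℝ => x ^ 2) (nhds (0:ℝ)) (nhds (0:ℝ)) := by
      simpa using (continuous_pow 2).tendsto (0:ℝ)
    exact this.mono_left nhdsWithin_le_nhds
  · apply (hslope.div_const 2).congr'
    filter_upwards [self_mem_nhdsWithin] with x hx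
    have hx0 : x ≠ 0 := hx
    simp only [slope, hV'0, deriv_pow_field]
    field_simp
    simp only [sub_zero, vsub_eq_sub, smul_eq_mul]
    field_simp
    push_cast
    ring

lemma exp_pointwise {V : ℝ → ℝ} (hV : ContDiff ℝ 3 V) (hV0 : V 0 = 0)
    (hV'0 : deriv V 0 = 0) (y : ℝ) :
    Tendsto (fun ε : ℝ => Real.exp (-(2 / ε) * V (Real.sqrt ε * y)))
      (nhdsWithin 0 (Set.Ioi 0))
      (nhds (Real.exp (-(deriv (deriv V) 0 * y ^ 2)))) := by
  rcases eq_or_ne y 0 with rfl | hy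
  · simp only [mul_zero, hV0, ne_eq]
    simpa [hV0] using tendsto_const_nhds
  · have h1 : Tendsto (fun ε : ℝ => Real.sqrt ε * y) (nhdsWithin 0 (Set.Ioi 0))
        (nhdsWithin 0 {(0:ℝ)}ᶜ) := by
      apply tendsto_nhdsWithin_of_tendsto_nhds_of_eventually_within
      · have : Tendsto (fun ε : ℝ => Real.sqrt ε * y) (nhds 0) (nhds (Real.sqrt 0 * y)) :=
          (Real.continuous_sqrt.mul continuous_const).tendsto 0
        simpa using this.mono_left nhdsWithin_le_nhds
      · filter_upwards [self_mem_nhdsWithin] with ε hε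
        have : 0 < Real.sqrt ε := Real.sqrt_pos.2 hε
        exact mul_ne_zero (ne_of_gt this) hy
    have h2 : Tendsto (fun ε : ℝ => V (Real.sqrt ε * y) / (Real.sqrt ε * y) ^ 2)
        (nhdsWithin 0 (Set.Ioi 0)) (nhds (deriv (deriv V) 0 / 2)) :=
      (ratio_tendsto hV hV0 hV'0).comp h1
    have h3 : Tendsto (fun ε : ℝ => -(2 / ε) * V (Real.sqrt ε * y))
        (nhdsWithin 0 (Set.Ioi 0)) (nhds (-(deriv (deriv V) 0 * y ^ 2))) := by
      have h4 : Tendsto (fun ε : ℝ =>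
          -(2 * (V (Real.sqrt ε * y) / (Real.sqrt ε * y) ^ 2) * y ^ 2))
          (nhdsWithin 0 (Set.Ioi 0)) (nhds (-(2 * (deriv (deriv V) 0 / 2) * y ^ 2))) := by
        exact (((h2.const_mul 2).mul_const (y ^ 2))).neg
      have he : -(2 * (deriv (deriv V) 0 / 2) * y ^ 2) = -(deriv (deriv V) 0 * y ^ 2) := by
        ring
      rw [he] at h4
      apply h4.congr'
      filter_upwards [self_mem_nhdsWithin] with ε hε
      have hε0 : (0:ℝ) < ε := hε
      have hsq : (Real.sqrt ε * y) ^ 2 = ε * y ^ 2 := by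
        rw [mul_pow, Real.sq_sqrt hε0.le]
      rw [hsq]
      field_simp
    exact (Real.continuous_exp.tendsto _).comp h3

lemma integrable_exp_neg_of_quad {f : ℝ → ℝ} {c : ℝ} (hc : 0 < c) (hf : Continuous f)
    (hquad : ∀ x, c * x ^ 2 ≤ f x) : Integrable (fun x => Real.exp (-f x)) := by
  apply (integrable_exp_neg_mul_sq hc).mono'
    ((hf.neg.rexp).aestronglyMeasurable)
  filter_upwards with x
  rw [Real.norm_eq_abs, abs_of_pos (Real.exp_pos _)]
  exact Real.exp_le_exp.2 (by simp only [Pi.neg_apply]; linarith [hquad x])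

lemma integral_pos_of_pos {f : ℝ → ℝ} (hi : Integrable f) (hpos : ∀ x, 0 < f x) :
    0 < ∫ x, f x := by
  rw [integral_pos_iff_support_of_nonneg_ae (Filter.Eventually.of_forall fun x => (hpos x).le) hi]
  have hs : Function.support f = Set.univ := by
    ext x; simp [Function.mem_support, (hpos x).ne']
  rw [hs]
  simp

section Potential

variable {V : ℝ → ℝ} {δ : ℝ}

lemma h_le_gauss (hV : ContDiff ℝ 3 V) (hV0 : V 0 = 0) (hV'0 : deriv V 0 = 0)
    (hconv : ∀ x, δ ≤ deriv (deriv V) x) {ε : ℝ} (hε : 0 < ε) (y : ℝ) :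
    Real.exp (-(2 / ε) * V (Real.sqrt ε * y)) ≤ Real.exp (-(δ * y ^ 2)) := by
  apply Real.exp_le_exp.2
  have hq := quad_lower hV hV0 hV'0 hconv (Real.sqrt ε * y)
  rw [mul_pow, Real.sq_sqrt hε.le] at hq
  rw [neg_mul, neg_le_neg_iff]
  rw [div_mul_eq_mul_div, le_div_iff₀ hε]
  nlinarith [hq]

lemma gauss_le_gauss (hδ : 0 < δ) (hconv : ∀ x, δ ≤ deriv (deriv V) x) (y : ℝ) :
    Real.exp (-(deriv (deriv V) 0 * y ^ 2)) ≤ Real.exp (-(δ * y ^ 2)) := by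
  apply Real.exp_le_exp.2
  have := hconv 0
  nlinarith [sq_nonneg y]

lemma cont_h (hV : ContDiff ℝ 3 V) (ε : ℝ) :
    Continuous (fun y => Real.exp (-(2 / ε) * V (Real.sqrt ε * y))) := by
  have := hV.continuous
  fun_prop

lemma integrable_h (hV : ContDiff ℝ 3 V) (hV0 : V 0 = 0) (hV'0 : deriv V 0 = 0)
    (hδ : 0 < δ) (hconv : ∀ x, δ ≤ deriv (deriv V) x) {ε : ℝ} (hε : 0 < ε) :
    Integrable (fun y => Real.exp (-(2 / ε) * V (Real.sqrt ε * y))) := by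
  apply (integrable_exp_neg_of_quad hδ (by fun_prop : Continuous fun y : ℝ => δ * y ^ 2)
    (fun x => le_refl _)).mono' ((cont_h hV ε).aestronglyMeasurable)
  filter_upwards with y
  rw [Real.norm_eq_abs, abs_of_pos (Real.exp_pos _)]
  exact h_le_gauss hV hV0 hV'0 hconv hε y

lemma integrable_G (ha : 0 < deriv (deriv V) 0) :
    Integrable (fun y => Real.exp (-(deriv (deriv V) 0 * y ^ 2))) :=
  integrable_exp_neg_of_quad ha (by fun_prop) (fun x => le_refl _)

lemma L1_tendsto (hV : ContDiff ℝ 3 V) (hV0 : V 0 = 0) (hV'0 : deriv V 0 = 0)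
    (hδ : 0 < δ) (hconv : ∀ x, δ ≤ deriv (deriv V) x) :
    Tendsto (fun ε : ℝ => ∫ y : ℝ,
        |Real.exp (-(2 / ε) * V (Real.sqrt ε * y)) -
          Real.exp (-(deriv (deriv V) 0 * y ^ 2))|)
      (nhdsWithin 0 (Set.Ioi 0)) (nhds 0) := by
  suffices h : Tendsto (fun ε : ℝ => ∫ y : ℝ,
        |Real.exp (-(2 / ε) * V (Real.sqrt ε * y)) -
          Real.exp (-(deriv (deriv V) 0 * y ^ 2))|)
      (nhdsWithin 0 (Set.Ioi 0)) (nhds (∫ _y : ℝ, (0:ℝ))) by simpa using h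
  apply tendsto_integral_filter_of_dominated_convergence
    (bound := fun y => 2 * Real.exp (-(δ * y ^ 2)))
  · filter_upwards with ε
    exact ((cont_h hV ε).sub (by fun_prop)).abs.aestronglyMeasurable
  · filter_upwards [self_mem_nhdsWithin] with ε hε
    filter_upwards with y
    have h1 := h_le_gauss hV hV0 hV'0 hconv hε y
    have h2 := gauss_le_gauss hδ hconv y
    rw [Real.norm_eq_abs, abs_abs]
    have := abs_sub (Real.exp (-(2 / ε) * V (Real.sqrt ε * y)))
      (Real.exp (-(deriv (deriv V) 0 * y ^ 2)))
    calc |Real.exp (-(2 / ε) * V (Real.sqrt ε * y)) -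
          Real.exp (-(deriv (deriv V) 0 * y ^ 2))|
        ≤ |Real.exp (-(2 / ε) * V (Real.sqrt ε * y))| +
          |Real.exp (-(deriv (deriv V) 0 * y ^ 2))| := abs_sub _ _
      _ ≤ 2 * Real.exp (-(δ * y ^ 2)) := by
          rw [abs_of_pos (Real.exp_pos _), abs_of_pos (Real.exp_pos _)]
          linarith
  · exact (integrable_exp_neg_of_quad hδ (by fun_prop) (fun x => le_refl _)).const_mul 2
  · filter_upwards with y
    have h1 := exp_pointwise hV hV0 hV'0 y
    have h2 : Tendsto (fun ε : ℝ => Real.exp (-(2 / ε) * V (Real.sqrt ε * y)) -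
        Real.exp (-(deriv (deriv V) 0 * y ^ 2))) (nhdsWithin 0 (Set.Ioi 0))
        (nhds (Real.exp (-(deriv (deriv V) 0 * y ^ 2)) -
          Real.exp (-(deriv (deriv V) 0 * y ^ 2)))) := h1.sub tendsto_const_nhds
    simpa using h2.abs

lemma N_tendsto (hV : ContDiff ℝ 3 V) (hV0 : V 0 = 0) (hV'0 : deriv V 0 = 0)
    (hδ : 0 < δ) (hconv : ∀ x, δ ≤ deriv (deriv V) x) :
    Tendsto (fun ε : ℝ => ∫ y : ℝ, Real.exp (-(2 / ε) * V (Real.sqrt ε * y)))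
      (nhdsWithin 0 (Set.Ioi 0))
      (nhds (∫ y : ℝ, Real.exp (-(deriv (deriv V) 0 * y ^ 2)))) := by
  apply tendsto_integral_filter_of_dominated_convergence
    (bound := fun y => Real.exp (-(δ * y ^ 2)))
  · filter_upwards with ε
    exact (cont_h hV ε).aestronglyMeasurable
  · filter_upwards [self_mem_nhdsWithin] with ε hε
    filter_upwards with y
    rw [Real.norm_eq_abs, abs_of_pos (Real.exp_pos _)]
    exact h_le_gauss hV hV0 hV'0 hconv hε y
  · exact integrable_exp_neg_of_quad hδ (by fun_prop) (fun x => le_refl _)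
  · filter_upwards with y
    exact exp_pointwise hV hV0 hV'0 y

end Potential

lemma key_lemma {V : ℝ → ℝ} {δ : ℝ} (hV : ContDiff ℝ 3 V) (hV0 : V 0 = 0)
    (hV'0 : deriv V 0 = 0) (ha : 0 < deriv (deriv V) 0)
    (hδ : 0 < δ) (hconv : ∀ x, δ ≤ deriv (deriv V) x) :
    Tendsto (fun ε : ℝ => ∫ y : ℝ,
        |Real.exp (-(2 / ε) * V (Real.sqrt ε * y)) /
            (∫ z : ℝ, Real.exp (-(2 / ε) * V (Real.sqrt ε * z))) -
          Real.exp (-(deriv (deriv V) 0 * y ^ 2)) /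
            (∫ z : ℝ, Real.exp (-(deriv (deriv V) 0 * z ^ 2)))|)
      (nhdsWithin 0 (Set.Ioi 0)) (nhds 0) := by
  set a := deriv (deriv V) 0 with ha_def
  set NG : ℝ := ∫ z : ℝ, Real.exp (-(a * z ^ 2)) with hNG_def
  have hintG : Integrable (fun z : ℝ => Real.exp (-(a * z ^ 2))) := integrable_G ha
  have hNG : 0 < NG := integral_pos_of_pos hintG (fun x => Real.exp_pos _)
  set N : ℝ → ℝ := fun ε => ∫ z : ℝ, Real.exp (-(2 / ε) * V (Real.sqrt ε * z)) with hN_def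
  set L : ℝ → ℝ := fun ε => ∫ y : ℝ,
      |Real.exp (-(2 / ε) * V (Real.sqrt ε * y)) - Real.exp (-(a * y ^ 2))| with hL_def
  have hN : Tendsto N (nhdsWithin 0 (Set.Ioi 0)) (nhds NG) := N_tendsto hV hV0 hV'0 hδ hconv
  have hL : Tendsto L (nhdsWithin 0 (Set.Ioi 0)) (nhds 0) := L1_tendsto hV hV0 hV'0 hδ hconv
  have hNinv : Tendsto (fun ε => (N ε)⁻¹) (nhdsWithin 0 (Set.Ioi 0)) (nhds NG⁻¹) :=
    hN.inv₀ hNG.ne'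
  have hB : Tendsto (fun ε => (N ε)⁻¹ * L ε + |(N ε)⁻¹ - NG⁻¹| * NG)
      (nhdsWithin 0 (Set.Ioi 0)) (nhds 0) := by
    have h1 : Tendsto (fun ε => (N ε)⁻¹ * L ε) (nhdsWithin 0 (Set.Ioi 0))
        (nhds (NG⁻¹ * 0)) := hNinv.mul hL
    have h2 : Tendsto (fun ε => |(N ε)⁻¹ - NG⁻¹| * NG) (nhdsWithin 0 (Set.Ioi 0))
        (nhds (|NG⁻¹ - NG⁻¹| * NG)) := ((hNinv.sub tendsto_const_nhds).abs).mul_const NG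
    simpa using h1.add h2
  apply tendsto_of_tendsto_of_tendsto_of_le_of_le' tendsto_const_nhds hB
  · filter_upwards with ε
    exact integral_nonneg fun y => abs_nonneg _
  · filter_upwards [self_mem_nhdsWithin] with ε hε
    have hε0 : (0:ℝ) < ε := hε
    have hinth : Integrable (fun y : ℝ => Real.exp (-(2 / ε) * V (Real.sqrt ε * y))) :=
      integrable_h hV hV0 hV'0 hδ hconv hε0
    have hNε : 0 < N ε := integral_pos_of_pos hinth (fun x => Real.exp_pos _)
    have hpt : ∀ y : ℝ,
        |Real.exp (-(2 / ε) * V (Real.sqrt ε * y)) / N ε -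
          Real.exp (-(a * y ^ 2)) / NG| ≤
        (N ε)⁻¹ * |Real.exp (-(2 / ε) * V (Real.sqrt ε * y)) - Real.exp (-(a * y ^ 2))| +
          |(N ε)⁻¹ - NG⁻¹| * Real.exp (-(a * y ^ 2)) := by
      intro y
      set A := Real.exp (-(2 / ε) * V (Real.sqrt ε * y))
      set B := Real.exp (-(a * y ^ 2))
      have e : A / N ε - B / NG = (N ε)⁻¹ * (A - B) + ((N ε)⁻¹ - NG⁻¹) * B := by
        field_simp
        ring
      rw [e]
      calc |(N ε)⁻¹ * (A - B) + ((N ε)⁻¹ - NG⁻¹) * B|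
          ≤ |(N ε)⁻¹ * (A - B)| + |((N ε)⁻¹ - NG⁻¹) * B| := abs_add_le _ _
        _ = (N ε)⁻¹ * |A - B| + |(N ε)⁻¹ - NG⁻¹| * B := by
            rw [abs_mul, abs_mul, abs_of_pos (inv_pos.2 hNε),
              abs_of_pos (Real.exp_pos _)]
    have hint1 : Integrable (fun y : ℝ =>
        |Real.exp (-(2 / ε) * V (Real.sqrt ε * y)) - Real.exp (-(a * y ^ 2))|) :=
      (hinth.sub hintG).abs
    have hintLHS : Integrable (fun y : ℝ =>
        |Real.exp (-(2 / ε) * V (Real.sqrt ε * y)) / N ε -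
          Real.exp (-(a * y ^ 2)) / NG|) :=
      ((hinth.div_const (N ε)).sub (hintG.div_const NG)).abs
    have hintRHS : Integrable (fun y : ℝ =>
        (N ε)⁻¹ * |Real.exp (-(2 / ε) * V (Real.sqrt ε * y)) - Real.exp (-(a * y ^ 2))| +
          |(N ε)⁻¹ - NG⁻¹| * Real.exp (-(a * y ^ 2))) :=
      (hint1.const_mul _).add (hintG.const_mul _)
    calc (∫ y : ℝ, |Real.exp (-(2 / ε) * V (Real.sqrt ε * y)) / N ε -
            Real.exp (-(a * y ^ 2)) / NG|)
        ≤ ∫ y : ℝ, ((N ε)⁻¹ *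
            |Real.exp (-(2 / ε) * V (Real.sqrt ε * y)) - Real.exp (-(a * y ^ 2))| +
            |(N ε)⁻¹ - NG⁻¹| * Real.exp (-(a * y ^ 2))) :=
          integral_mono hintLHS hintRHS hpt
      _ = (N ε)⁻¹ * L ε + |(N ε)⁻¹ - NG⁻¹| * NG := by
          rw [integral_add (hint1.const_mul _) (hintG.const_mul _),
            integral_const_mul, integral_const_mul]

lemma tv_nonneg (P Q : Measure ℝ) : 0 ≤ tvDist P Q :=
  Real.iSup_nonneg fun A => abs_nonneg _

lemma tv_le {p q : ℝ → ℝ} (hp : Integrable p) (hq : Integrable q)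
    (hp0 : ∀ x, 0 ≤ p x) (hq0 : ∀ x, 0 ≤ q x) :
    tvDist (volume.withDensity fun x => ENNReal.ofReal (p x))
        (volume.withDensity fun x => ENNReal.ofReal (q x)) ≤ ∫ x, |p x - q x| := by
  haveI : Nonempty {s : Set ℝ // MeasurableSet s} := ⟨⟨∅, MeasurableSet.empty⟩⟩
  apply ciSup_le
  rintro ⟨A, hA⟩
  have hPA : ((volume.withDensity fun x => ENNReal.ofReal (p x)) A).toReal
      = ∫ x in A, p x := by
    rw [withDensity_apply _ hA,
      ← ofReal_integral_eq_lintegral_ofReal hp.integrableOn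
        (Filter.Eventually.of_forall fun x => hp0 x),
      ENNReal.toReal_ofReal (integral_nonneg fun x => hp0 x)]
  have hQA : ((volume.withDensity fun x => ENNReal.ofReal (q x)) A).toReal
      = ∫ x in A, q x := by
    rw [withDensity_apply _ hA,
      ← ofReal_integral_eq_lintegral_ofReal hq.integrableOn
        (Filter.Eventually.of_forall fun x => hq0 x),
      ENNReal.toReal_ofReal (integral_nonneg fun x => hq0 x)]
  rw [hPA, hQA, ← integral_sub hp.integrableOn hq.integrableOn]
  calc |∫ x in A, (p x - q x)| ≤ ∫ x in A, |p x - q x| := by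
        simpa [Real.norm_eq_abs] using
          norm_integral_le_integral_norm (μ := volume.restrict A) (f := fun x => p x - q x)
    _ ≤ ∫ x, |p x - q x| :=
        setIntegral_le_integral (hp.sub hq).abs
          (Filter.Eventually.of_forall fun x => abs_nonneg _)

/-- If `V` is a coercive regular potential and `V̂` is a smooth
coercive regular potential with `V̂''(0) = V''(0)`, then the total variation distance
between the Gibbs measures `μ^ε(dx) = e^{-(2/ε)V(x)}dx / M^ε` and
`μ̂^ε(dx) = e^{-(2/ε)V̂(x)}dx / M̂^ε` tends to `0` as `ε → 0⁺`. -/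
theorem gibbs_measures_tendsto_same
    (V W : ℝ → ℝ) (δ δ' : ℝ)
    (hV : ContDiff ℝ 3 V)
    (hV0 : V 0 = 0)
    (hVcrit : ∀ x : ℝ, deriv V x = 0 ↔ x = 0)
    (hV''0 : 0 < deriv (deriv V) 0)
    (hVcoercive : Tendsto V (Filter.cocompact ℝ) atTop)
    (hδ : 0 < δ)
    (hVconvex : ∀ x : ℝ, δ ≤ deriv (deriv V) x)
    (hW : ContDiff ℝ 3 W)
    (hW0 : W 0 = 0)
    (hWcrit : ∀ x : ℝ, deriv W x = 0 ↔ x = 0)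
    (hW''0 : 0 < deriv (deriv W) 0)
    (hWcoercive : Tendsto W (Filter.cocompact ℝ) atTop)
    (hδ' : 0 < δ')
    (hWconvex : ∀ x : ℝ, δ' ≤ deriv (deriv W) x)
    (hWbdd2 : BddAbove (Set.range fun x : ℝ => |deriv (deriv W) x|))
    (hWbdd3 : BddAbove (Set.range fun x : ℝ => |deriv (deriv (deriv W)) x|))
    (hsecond : deriv (deriv W) 0 = deriv (deriv V) 0) :
    Tendsto
      (fun ε : ℝ =>
        tvDist
          (volume.withDensity fun x : ℝ =>
            ENNReal.ofReal
              (Real.exp (-(2 / ε) * V x) / ∫ z : ℝ, Real.exp (-(2 / ε) * V z)))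
          (volume.withDensity fun x : ℝ =>
            ENNReal.ofReal
              (Real.exp (-(2 / ε) * W x) / ∫ z : ℝ, Real.exp (-(2 / ε) * W z))))
      (nhdsWithin 0 (Set.Ioi 0)) (nhds 0) := by
  have hV'0 : deriv V 0 = 0 := (hVcrit 0).mpr rfl
  have hW'0 : deriv W 0 = 0 := (hWcrit 0).mpr rfl
  have keyV := key_lemma hV hV0 hV'0 hV''0 hδ hVconvex
  have keyW := key_lemma hW hW0 hW'0 hW''0 hδ' hWconvex
  rw [hsecond] at keyW
  have hS := keyV.add keyW
  rw [add_zero] at hS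
  apply tendsto_of_tendsto_of_tendsto_of_le_of_le' tendsto_const_nhds hS
  · filter_upwards with ε
    exact tv_nonneg _ _
  · filter_upwards [self_mem_nhdsWithin] with ε hε
    have hε0 : (0:ℝ) < ε := hε
    have hsqpos : 0 < Real.sqrt ε := Real.sqrt_pos.2 hε0
    set a := deriv (deriv V) 0 with ha_def
    -- integrability on x-space
    have hquadV := quad_lower hV hV0 hV'0 hVconvex
    have hquadW := quad_lower hW hW0 hW'0 hWconvex
    have hVint : Integrable (fun x : ℝ => Real.exp (-(2 / ε) * V x)) := by
      have : Integrable (fun x : ℝ => Real.exp (-((2 / ε) * V x))) := by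
        apply integrable_exp_neg_of_quad (c := δ / ε) (div_pos hδ hε0)
          (by have := hV.continuous; fun_prop)
        intro x
        have := hquadV x
        have h2 : (0:ℝ) < 2 / ε := by positivity
        rw [div_mul_eq_mul_div, div_mul_eq_mul_div, div_le_div_iff₀ hε0 hε0]
        nlinarith
      simpa [neg_mul] using this
    have hWint : Integrable (fun x : ℝ => Real.exp (-(2 / ε) * W x)) := by
      have : Integrable (fun x : ℝ => Real.exp (-((2 / ε) * W x))) := by
        apply integrable_exp_neg_of_quad (c := δ' / ε) (div_pos hδ' hε0)
          (by have := hW.continuous; fun_prop)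
        intro x
        have := hquadW x
        rw [div_mul_eq_mul_div, div_mul_eq_mul_div, div_le_div_iff₀ hε0 hε0]
        nlinarith
      simpa [neg_mul] using this
    set IV : ℝ := ∫ z : ℝ, Real.exp (-(2 / ε) * V z) with hIV_def
    set IW : ℝ := ∫ z : ℝ, Real.exp (-(2 / ε) * W z) with hIW_def
    have hIVpos : 0 < IV := integral_pos_of_pos hVint fun x => Real.exp_pos _
    have hIWpos : 0 < IW := integral_pos_of_pos hWint fun x => Real.exp_pos _
    -- y-space quantities
    have hintHV : Integrable (fun y : ℝ => Real.exp (-(2 / ε) * V (Real.sqrt ε * y))) :=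
      integrable_h hV hV0 hV'0 hδ hVconvex hε0
    have hintHW : Integrable (fun y : ℝ => Real.exp (-(2 / ε) * W (Real.sqrt ε * y))) :=
      integrable_h hW hW0 hW'0 hδ' hWconvex hε0
    set NV : ℝ := ∫ z : ℝ, Real.exp (-(2 / ε) * V (Real.sqrt ε * z)) with hNV_def
    set NW : ℝ := ∫ z : ℝ, Real.exp (-(2 / ε) * W (Real.sqrt ε * z)) with hNW_def
    have hNVpos : 0 < NV := integral_pos_of_pos hintHV fun x => Real.exp_pos _
    have hNWpos : 0 < NW := integral_pos_of_pos hintHW fun x => Real.exp_pos _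
    have hintG : Integrable (fun z : ℝ => Real.exp (-(a * z ^ 2))) := integrable_G hV''0
    set NG : ℝ := ∫ z : ℝ, Real.exp (-(a * z ^ 2)) with hNG_def
    -- substitution identities
    have hIVsub : IV = Real.sqrt ε * NV := by
      have h := MeasureTheory.Measure.integral_comp_mul_left
        (fun x : ℝ => Real.exp (-(2 / ε) * V x)) (Real.sqrt ε)
      simp only [smul_eq_mul, abs_inv, abs_of_pos hsqpos] at h
      rw [hNV_def, hIV_def, h, ← mul_assoc, mul_inv_cancel₀ hsqpos.ne', one_mul]
    have hIWsub : IW = Real.sqrt ε * NW := by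
      have h := MeasureTheory.Measure.integral_comp_mul_left
        (fun x : ℝ => Real.exp (-(2 / ε) * W x)) (Real.sqrt ε)
      simp only [smul_eq_mul, abs_inv, abs_of_pos hsqpos] at h
      rw [hNW_def, hIW_def, h, ← mul_assoc, mul_inv_cancel₀ hsqpos.ne', one_mul]
    -- step A
    have stepA := tv_le (p := fun x => Real.exp (-(2 / ε) * V x) / IV)
      (q := fun x => Real.exp (-(2 / ε) * W x) / IW)
      (hVint.div_const IV) (hWint.div_const IW)
      (fun x => div_nonneg (Real.exp_pos _).le hIVpos.le)
      (fun x => div_nonneg (Real.exp_pos _).le hIWpos.le)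
    -- step B : substitution
    have stepB : (∫ x : ℝ, |Real.exp (-(2 / ε) * V x) / IV -
          Real.exp (-(2 / ε) * W x) / IW|)
        = ∫ y : ℝ, |Real.exp (-(2 / ε) * V (Real.sqrt ε * y)) / NV -
            Real.exp (-(2 / ε) * W (Real.sqrt ε * y)) / NW| := by
      have h := MeasureTheory.Measure.integral_comp_mul_left
        (fun x : ℝ => |Real.exp (-(2 / ε) * V x) / IV -
          Real.exp (-(2 / ε) * W x) / IW|) (Real.sqrt ε)
      simp only [smul_eq_mul, abs_inv, abs_of_pos hsqpos] at h
      rw [show (∫ x : ℝ, |Real.exp (-(2 / ε) * V x) / IV -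
            Real.exp (-(2 / ε) * W x) / IW|)
          = Real.sqrt ε * ∫ y : ℝ, |Real.exp (-(2 / ε) * V (Real.sqrt ε * y)) / IV -
            Real.exp (-(2 / ε) * W (Real.sqrt ε * y)) / IW| by
        rw [h, ← mul_assoc, mul_inv_cancel₀ hsqpos.ne', one_mul]]
      rw [← integral_const_mul]
      congr 1
      ext y
      have habs : ∀ u : ℝ, Real.sqrt ε * |u| = |Real.sqrt ε * u| := fun u => by
        rw [abs_mul, abs_of_pos hsqpos]
      rw [habs]
      congr 1
      rw [hIVsub, hIWsub, mul_sub, mul_div_assoc', mul_div_assoc',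
        mul_div_mul_left _ _ hsqpos.ne', mul_div_mul_left _ _ hsqpos.ne']
    -- step C : triangle inequality
    have hintLV : Integrable (fun y : ℝ =>
        |Real.exp (-(2 / ε) * V (Real.sqrt ε * y)) / NV - Real.exp (-(a * y ^ 2)) / NG|) :=
      ((hintHV.div_const NV).sub (hintG.div_const NG)).abs
    have hintLW : Integrable (fun y : ℝ =>
        |Real.exp (-(2 / ε) * W (Real.sqrt ε * y)) / NW - Real.exp (-(a * y ^ 2)) / NG|) :=
      ((hintHW.div_const NW).sub (hintG.div_const NG)).abs
    have stepC : (∫ y : ℝ, |Real.exp (-(2 / ε) * V (Real.sqrt ε * y)) / NV -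
            Real.exp (-(2 / ε) * W (Real.sqrt ε * y)) / NW|)
        ≤ (∫ y : ℝ, |Real.exp (-(2 / ε) * V (Real.sqrt ε * y)) / NV -
            Real.exp (-(a * y ^ 2)) / NG|) +
          ∫ y : ℝ, |Real.exp (-(2 / ε) * W (Real.sqrt ε * y)) / NW -
            Real.exp (-(a * y ^ 2)) / NG| := by
      rw [← integral_add hintLV hintLW]
      apply integral_mono
        (((hintHV.div_const NV).sub (hintHW.div_const NW)).abs)
        (hintLV.add hintLW)
      intro y
      calc |Real.exp (-(2 / ε) * V (Real.sqrt ε * y)) / NV -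
            Real.exp (-(2 / ε) * W (Real.sqrt ε * y)) / NW|
          ≤ |Real.exp (-(2 / ε) * V (Real.sqrt ε * y)) / NV -
              Real.exp (-(a * y ^ 2)) / NG| +
            |Real.exp (-(a * y ^ 2)) / NG -
              Real.exp (-(2 / ε) * W (Real.sqrt ε * y)) / NW| := abs_sub_le _ _ _
        _ = _ := by rw [abs_sub_comm (Real.exp (-(a * y ^ 2)) / NG)]; rfl
    calc tvDist _ _ ≤ _ := stepA
      _ = _ := stepB
      _ ≤ _ := stepC
end

section
/- Let V be a regular potential and let ψ be the solution of the gradient flow dψ_t = -V'(ψ_t)dt with ψ_0 = x₀ ∈ ℝ \ {0}. Fix γ ∈ (0,1) and set δ_ε := ε^γ, t_ε := (1/(2V''(0)))(ln(1/ε) + ln(2V''(0))), and for b ∈ ℝ set t_ε(b) := t_ε + b/V''(0) and t*_ε(b) := t_ε(b) + b δ_ε. Then for every b ∈ ℝ the limit lim_{ε→0} (sup_{t between t_ε(b) and t*_ε(b)} |ψ_t|)/√ε exists and is a finite strictly positive real number ρ(b). -/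
open Filter Set


private lemma sqrt_eq_exp_half_log {x : ℝ} (hx : 0 < x) :
    Real.sqrt x = Real.exp (Real.log x / 2) := by
  rw [Real.sqrt_eq_rpow, Real.rpow_def_of_pos hx]; ring_nf

private lemma final_assembly (ψ : ℝ → ℝ) (a b γ ρ₀ : ℝ) (ha0 : 0 < a) (hγ0 : 0 < γ)
    (hψcont : ∀ t : ℝ, 0 ≤ t → ContinuousAt ψ t)
    (hρ₀ : 0 < ρ₀)
    (habs : Tendsto (fun t => |ψ t| * Real.exp (a * t)) atTop (nhds ρ₀)) :
    ∃ ρ : ℝ, 0 < ρ ∧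
      Tendsto
        (fun ε : ℝ =>
          (⨆ t : (Set.uIcc
              (1 / (2 * a) * (Real.log (1 / ε) + Real.log (2 * a)) + b / a)
              (1 / (2 * a) * (Real.log (1 / ε) + Real.log (2 * a)) + b / a + b * ε ^ γ) : Set ℝ),
            |ψ t|) / Real.sqrt ε)
        (nhdsWithin 0 (Set.Ioi 0)) (nhds ρ) := by
  have h2a : (0:ℝ) < 2 * a := by linarith
  set S := Real.sqrt (2 * a) with hSdef
  have hS0 : 0 < S := Real.sqrt_pos.mpr h2a
  set τ : ℝ → ℝ := fun ε => 1 / (2 * a) * (Real.log (1 / ε) + Real.log (2 * a)) + b / a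
    with hτdef
  -- the key exponential identity
  have hkey : ∀ ε : ℝ, 0 < ε →
      Real.exp (-(a * τ ε)) = Real.sqrt ε * Real.exp (-b) / S := by
    intro ε hε
    have hτε : -(a * τ ε) = Real.log ε / 2 + (-(Real.log (2*a) / 2) + -b) := by
      rw [hτdef]
      simp only [one_div, Real.log_inv]
      field_simp
      ring
    rw [hτε, Real.exp_add, Real.exp_add, ← sqrt_eq_exp_half_log hε, Real.exp_neg, Real.exp_neg,
      ← sqrt_eq_exp_half_log h2a, ← hSdef, div_eq_mul_inv]
    ring
  -- τ tends to infinity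
  have hτtop : Tendsto τ (nhdsWithin 0 (Set.Ioi 0)) atTop := by
    have h1 : Tendsto (fun ε : ℝ => 1 / ε) (nhdsWithin 0 (Set.Ioi 0)) atTop := by
      simpa [one_div] using tendsto_inv_nhdsGT_zero
    have h2 := Real.tendsto_log_atTop.comp h1
    have h3 := tendsto_atTop_add_const_right _ (Real.log (2*a)) h2
    have h4 := h3.const_mul_atTop (show (0:ℝ) < 1/(2*a) by positivity)
    exact tendsto_atTop_add_const_right _ (b/a) h4
  -- ε ^ γ tends to 0
  have hδ : Tendsto (fun ε : ℝ => ε ^ γ) (nhdsWithin 0 (Set.Ioi 0)) (nhds 0) := by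
    have h1 := (Real.continuousAt_rpow_const 0 γ (Or.inr hγ0.le)).tendsto
    rw [Real.zero_rpow (ne_of_gt hγ0)] at h1
    exact h1.mono_left nhdsWithin_le_nhds
  have hbδ : Tendsto (fun ε : ℝ => |b| * ε ^ γ) (nhdsWithin 0 (Set.Ioi 0)) (nhds 0) := by
    simpa using hδ.const_mul |b|
  set ρ := ρ₀ * Real.exp (-b) / S with hρdef
  have hρ0 : 0 < ρ := by positivity
  refine ⟨ρ, hρ0, ?_⟩
  rw [show (fun ε : ℝ =>
          (⨆ t : (Set.uIcc
              (1 / (2 * a) * (Real.log (1 / ε) + Real.log (2 * a)) + b / a)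
              (1 / (2 * a) * (Real.log (1 / ε) + Real.log (2 * a)) + b / a + b * ε ^ γ) : Set ℝ),
            |ψ t|) / Real.sqrt ε) =
        (fun ε : ℝ => (⨆ t : (Set.uIcc (τ ε) (τ ε + b * ε ^ γ) : Set ℝ), |ψ t|) / Real.sqrt ε)
    from rfl]
  -- generic facts about the interval, for ε in the relevant regime
  have interval_facts : ∀ T : ℝ, 0 ≤ T → ∀ ε : ℝ, 0 < ε → |b| * ε ^ γ ≤ 1 → T + 1 ≤ τ ε →
      (∀ t ∈ Set.uIcc (τ ε) (τ ε + b * ε ^ γ), τ ε - |b| * ε ^ γ ≤ t ∧ T ≤ t) ∧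
      BddAbove (Set.range fun t : (Set.uIcc (τ ε) (τ ε + b * ε ^ γ) : Set ℝ) => |ψ t|) := by
    intro T hT ε hε h1 h2
    have hεγ : 0 ≤ ε ^ γ := Real.rpow_nonneg hε.le γ
    have hblow : -( |b| * ε ^ γ) ≤ b * ε ^ γ := by
      rw [← neg_mul]
      exact mul_le_mul_of_nonneg_right (neg_abs_le b) hεγ
    have hmem : ∀ t ∈ Set.uIcc (τ ε) (τ ε + b * ε ^ γ), τ ε - |b| * ε ^ γ ≤ t ∧ T ≤ t := by
      intro t ht
      rw [Set.mem_uIcc] at ht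
      have habs0 : 0 ≤ |b| * ε ^ γ := by positivity
      have h3 : τ ε - |b| * ε ^ γ ≤ t := by
        rcases ht with h | h
        · linarith [h.1]
        · linarith [h.1]
      exact ⟨h3, by linarith⟩
    refine ⟨hmem, ?_⟩
    have hcont : ContinuousOn ψ (Set.uIcc (τ ε) (τ ε + b * ε ^ γ)) := by
      intro t ht
      exact (hψcont t (by linarith [(hmem t ht).2])).continuousWithinAt
    have h1' : BddAbove ((fun x => |ψ x|) '' Set.uIcc (τ ε) (τ ε + b * ε ^ γ)) :=
      (isCompact_uIcc.image_of_continuousOn (hcont.abs)).bddAbove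
    rwa [Set.image_eq_range] at h1'
  rw [tendsto_order]
  constructor
  · -- lower bound
    intro c hc
    set η := (ρ - c) / 2 * Real.exp b * S with hηdef
    have hη : 0 < η := by
      have : 0 < ρ - c := by linarith
      positivity
    have hηval : η * Real.exp (-b) / S = (ρ - c) / 2 := by
      rw [hηdef, Real.exp_neg]
      field_simp
    obtain ⟨T₁, hT₁⟩ := (habs.eventually_const_lt (show ρ₀ - η < ρ₀ by linarith)).exists_forall_of_atTop
    filter_upwards [self_mem_nhdsWithin,
      hτtop.eventually (eventually_ge_atTop (max T₁ 0 + 1)),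
      hbδ.eventually_lt_const one_pos] with ε hε hτT hb1
    have hε' : (0:ℝ) < ε := hε
    obtain ⟨hmem, hbdd⟩ := interval_facts (max T₁ 0) (le_max_right _ _) ε hε' hb1.le hτT
    have hsε : 0 < Real.sqrt ε := Real.sqrt_pos.mpr hε'
    rw [lt_div_iff₀ hsε]
    have hτmem : τ ε ∈ Set.uIcc (τ ε) (τ ε + b * ε ^ γ) := Set.left_mem_uIcc
    have hle := le_ciSup hbdd (⟨τ ε, hτmem⟩ : (Set.uIcc (τ ε) (τ ε + b * ε ^ γ) : Set ℝ))
    have hτT₁ : T₁ ≤ τ ε := by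
      have := le_max_left T₁ 0
      linarith
    have h1 : ρ₀ - η < |ψ (τ ε)| * Real.exp (a * τ ε) := hT₁ (τ ε) hτT₁
    have h2 : (ρ₀ - η) * Real.exp (-(a * τ ε)) < |ψ (τ ε)| := by
      have h3 := mul_lt_mul_of_pos_right h1 (Real.exp_pos (-(a * τ ε)))
      rwa [mul_assoc, ← Real.exp_add, add_neg_cancel, Real.exp_zero, mul_one] at h3
    rw [hkey ε hε'] at h2
    calc c * Real.sqrt ε < (ρ + c)/2 * Real.sqrt ε := by
          apply mul_lt_mul_of_pos_right _ hsε
          linarith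
      _ = (ρ₀ - η) * (Real.sqrt ε * Real.exp (-b) / S) := by
          have e1 : (ρ₀ - η) * (Real.sqrt ε * Real.exp (-b) / S) =
              (ρ₀ * Real.exp (-b) / S - η * Real.exp (-b) / S) * Real.sqrt ε := by ring
          rw [e1, ← hρdef, hηval]
          ring
      _ < |ψ (τ ε)| := h2
      _ ≤ ⨆ t : (Set.uIcc (τ ε) (τ ε + b * ε ^ γ) : Set ℝ), |ψ t| := hle
  · -- upper bound
    intro c hc
    set η := (c - ρ) / 4 * Real.exp b * S with hηdef
    have hη : 0 < η := by
      have : 0 < c - ρ := by linarith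
      positivity
    have hηval : η * Real.exp (-b) / S = (c - ρ) / 4 := by
      rw [hηdef, Real.exp_neg]
      field_simp
    obtain ⟨T₂, hT₂⟩ := (habs.eventually_lt_const (show ρ₀ < ρ₀ + η by linarith)).exists_forall_of_atTop
    -- the correction factor tends to 1
    have hg : Tendsto (fun ε : ℝ => (ρ + (c - ρ)/4) * Real.exp (a * (|b| * ε ^ γ)))
        (nhdsWithin 0 (Set.Ioi 0)) (nhds (ρ + (c - ρ)/4)) := by
      have h1 : Tendsto (fun ε : ℝ => a * (|b| * ε ^ γ)) (nhdsWithin 0 (Set.Ioi 0)) (nhds 0) := by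
        simpa using hbδ.const_mul a
      have h2 := (Real.continuous_exp.tendsto 0).comp h1
      rw [Real.exp_zero] at h2
      simpa using h2.const_mul (ρ + (c - ρ)/4)
    filter_upwards [self_mem_nhdsWithin,
      hτtop.eventually (eventually_ge_atTop (max T₂ 0 + 1)),
      hbδ.eventually_lt_const one_pos,
      hg.eventually_lt_const (show ρ + (c - ρ)/4 < c by linarith)] with ε hε hτT hb1 hgε
    have hε' : (0:ℝ) < ε := hε
    obtain ⟨hmem, hbdd⟩ := interval_facts (max T₂ 0) (le_max_right _ _) ε hε' hb1.le hτT
    have hsε : 0 < Real.sqrt ε := Real.sqrt_pos.mpr hε'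
    rw [div_lt_iff₀ hsε]
    haveI : Nonempty (Set.uIcc (τ ε) (τ ε + b * ε ^ γ) : Set ℝ) :=
      Set.nonempty_uIcc.to_subtype
    have hB : (⨆ t : (Set.uIcc (τ ε) (τ ε + b * ε ^ γ) : Set ℝ), |ψ t|) ≤
        (ρ₀ + η) * (Real.exp (-(a * τ ε)) * Real.exp (a * (|b| * ε ^ γ))) := by
      apply ciSup_le
      intro t
      obtain ⟨ht1, ht2⟩ := hmem t t.2
      have htT₂ : T₂ ≤ (t : ℝ) := by
        have := le_max_left T₂ 0
        linarith
      have h1 : |ψ t| * Real.exp (a * t) < ρ₀ + η := hT₂ t htT₂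
      have h2 : |ψ (t:ℝ)| ≤ (ρ₀ + η) * Real.exp (-(a * t)) := by
        have h3 := mul_le_mul_of_nonneg_right h1.le (Real.exp_pos (-(a * (t:ℝ)))).le
        rwa [mul_assoc, ← Real.exp_add, add_neg_cancel, Real.exp_zero, mul_one] at h3
      refine le_trans h2 ?_
      apply mul_le_mul_of_nonneg_left _ (by positivity)
      rw [← Real.exp_add]
      apply Real.exp_le_exp.mpr
      have := mul_le_mul_of_nonneg_left ht1 ha0.le
      nlinarith
    refine lt_of_le_of_lt hB ?_
    rw [hkey ε hε']
    calc (ρ₀ + η) * (Real.sqrt ε * Real.exp (-b) / S * Real.exp (a * (|b| * ε ^ γ)))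
        = ((ρ₀ * Real.exp (-b) / S + η * Real.exp (-b) / S) * Real.exp (a * (|b| * ε ^ γ)))
            * Real.sqrt ε := by ring
      _ = ((ρ + (c - ρ)/4) * Real.exp (a * (|b| * ε ^ γ))) * Real.sqrt ε := by
          rw [← hρdef, hηval]
      _ < c * Real.sqrt ε := mul_lt_mul_of_pos_right hgε hsε


/-- Near 0, `f x` is comparable with `a x` (for `x ≥ 0`). -/
private lemma slope_facts {f : ℝ → ℝ} {a : ℝ} (hf0 : f 0 = 0) (ha : HasDerivAt f a 0)
    (ha0 : 0 < a) :
    ∃ η > 0, ∀ x, 0 ≤ x → x ≤ η → a / 2 * x ≤ f x ∧ f x ≤ 2 * a * x := by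
  have h := hasDerivAt_iff_tendsto_slope.mp ha
  have h' : Tendsto (slope f 0) (nhdsWithin 0 (Set.Ioi 0)) (nhds a) :=
    h.mono_left (nhdsWithin_mono _ (fun x hx => ne_of_gt hx))
  have h2 : ∀ᶠ x in nhdsWithin (0:ℝ) (Set.Ioi 0), slope f 0 x ∈ Set.Ioo (a/2) (2*a) :=
    h'.eventually (Ioo_mem_nhds (by linarith) (by linarith))
  rcases mem_nhdsGT_iff_exists_Ioc_subset.mp h2 with ⟨η, hη, hsub⟩
  refine ⟨η, hη, fun x hx0 hxη => ?_⟩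
  rcases eq_or_lt_of_le hx0 with h0 | h0
  · simp [← h0, hf0]
  · have hs := hsub ⟨h0, hxη⟩
    simp only [Set.mem_setOf_eq, slope_def_field, hf0, Set.mem_Ioo] at hs
    have hdiv : (f x - 0) / (x - 0) = f x / x := by ring_nf
    rw [hdiv] at hs
    constructor
    · have := hs.1
      rw [lt_div_iff₀ h0] at this; linarith
    · have := hs.2
      rw [div_lt_iff₀ h0] at this; linarith



private lemma psi_pos (f ψ : ℝ → ℝ) (a x₀ η₁ : ℝ) (hη₁ : 0 < η₁)
    (hslope : ∀ x, 0 ≤ x → x ≤ η₁ → a / 2 * x ≤ f x ∧ f x ≤ 2 * a * x)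
    (ha0 : 0 < a)
    (hx₀ : 0 < x₀) (hψ0 : ψ 0 = x₀)
    (hψ : ∀ t, 0 ≤ t → HasDerivAt ψ (-(f (ψ t))) t) :
    ∀ t, 0 ≤ t → 0 < ψ t := by
  by_contra hcon
  push_neg at hcon
  obtain ⟨t₂, ht₂0, ht₂⟩ := hcon
  set S : Set ℝ := {t | 0 ≤ t ∧ ψ t ≤ 0} with hS
  have hSne : S.Nonempty := ⟨t₂, ht₂0, ht₂⟩
  have hSbd : BddBelow S := ⟨0, fun t ht => ht.1⟩
  set T := sInf S with hT
  have hT0 : 0 ≤ T := le_csInf hSne fun t ht => ht.1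
  have hcT : ContinuousAt ψ T := (hψ T hT0).continuousAt
  -- ψ T ≤ 0
  have hψT_le : ψ T ≤ 0 := by
    by_contra hgt
    push_neg at hgt
    have hev : ∀ᶠ s in nhds T, 0 < ψ s := hcT.eventually (eventually_gt_nhds hgt)
    rcases Metric.eventually_nhds_iff.mp hev with ⟨δ, hδ, hball⟩
    obtain ⟨t, htS, htlt⟩ := (csInf_lt_iff hSbd hSne).mp (show sInf S < T + δ by
      rw [← hT]; linarith)
    have hTt : T ≤ t := csInf_le hSbd htS
    have : 0 < ψ t := hball (by rw [Real.dist_eq, abs_lt]; constructor <;> linarith)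
    linarith [htS.2]
  -- ψ > 0 strictly before T
  have hbefore : ∀ s, 0 ≤ s → s < T → 0 < ψ s := by
    intro s hs0 hsT
    by_contra hle
    push_neg at hle
    exact absurd (csInf_le hSbd ⟨hs0, hle⟩) (not_le.mpr hsT)
  have hTpos : 0 < T := by
    rcases eq_or_lt_of_le hT0 with h | h
    · exfalso; rw [← h] at hψT_le; rw [hψ0] at hψT_le; linarith
    · exact h
  -- ψ T ≥ 0, hence = 0
  have hψT : ψ T = 0 := by
    refine le_antisymm hψT_le ?_
    by_contra hneg
    push_neg at hneg
    have hev : ∀ᶠ s in nhds T, ψ s < 0 := hcT.eventually (eventually_lt_nhds hneg)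
    rcases Metric.eventually_nhds_iff.mp hev with ⟨δ, hδ, hball⟩
    set s := max 0 (T - δ/2) with hs
    have hs0 : 0 ≤ s := le_max_left _ _
    have hsT : s < T := by
      apply max_lt hTpos; linarith
    have : ψ s < 0 := hball (by
      rw [Real.dist_eq, abs_lt]
      constructor
      · have : T - δ/2 ≤ s := le_max_right _ _
        linarith
      · linarith)
    exact absurd this (not_lt.mpr (hbefore s hs0 hsT).le)
  -- pick t₁ close to T with ψ < η₁ on [t₁, T]
  have hev : ∀ᶠ s in nhds T, ψ s < η₁ := hcT.eventually (eventually_lt_nhds (by rw [hψT]; exact hη₁))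
  rcases Metric.eventually_nhds_iff.mp hev with ⟨δ, hδ, hball⟩
  set t₁ := max 0 (T - δ/2) with ht₁
  have ht₁0 : 0 ≤ t₁ := le_max_left _ _
  have ht₁T : t₁ < T := max_lt hTpos (by linarith)
  have hηball : ∀ s, s ∈ Set.Icc t₁ T → ψ s < η₁ := by
    intro s ⟨hs1, hs2⟩
    apply hball
    rw [Real.dist_eq, abs_lt]
    have : T - δ/2 ≤ t₁ := le_max_right _ _
    constructor <;> linarith
  -- the Gronwall function
  set g : ℝ → ℝ := fun t => ψ t * Real.exp (2*a*t) with hg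
  have hg' : ∀ t, 0 ≤ t → HasDerivAt g ((-(f (ψ t))) * Real.exp (2*a*t) + ψ t * (Real.exp (2*a*t) * (2*a))) t := by
    intro t ht
    have he : HasDerivAt (fun t => Real.exp (2*a*t)) (Real.exp (2*a*t) * (2*a)) t := by
      simpa using (((hasDerivAt_id t).const_mul (2*a)).exp)
    exact (hψ t ht).mul he
  have hmono : MonotoneOn g (Set.Icc t₁ T) := by
    apply monotoneOn_of_deriv_nonneg (convex_Icc t₁ T)
    · intro t ht
      exact (hg' t (le_trans ht₁0 ht.1)).continuousAt.continuousWithinAt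
    · intro t ht
      rw [interior_Icc] at ht
      exact (hg' t (le_trans ht₁0 ht.1.le)).differentiableAt.differentiableWithinAt
    · intro t ht
      rw [interior_Icc] at ht
      have ht0 : 0 ≤ t := le_trans ht₁0 ht.1.le
      rw [(hg' t ht0).deriv]
      have hψt : 0 < ψ t := hbefore t ht0 ht.2
      have hψtη : ψ t ≤ η₁ := (hηball t ⟨ht.1.le, ht.2.le⟩).le
      have hfb := (hslope (ψ t) hψt.le hψtη).2
      have hexp : 0 < Real.exp (2*a*t) := Real.exp_pos _
      nlinarith
  have h1 : g t₁ ≤ g T := hmono ⟨le_refl t₁, ht₁T.le⟩ ⟨ht₁T.le, le_refl T⟩ ht₁T.le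
  have h2 : g T = 0 := by simp [hg, hψT]
  have h3 : 0 < g t₁ := by
    have := hbefore t₁ ht₁0 ht₁T
    positivity
  linarith


private lemma psi_small (f ψ : ℝ → ℝ) (x₀ : ℝ)
    (hfc : Continuous f)
    (hfpos : ∀ x, 0 < x → 0 < f x)
    (hx₀ : 0 < x₀) (hψ0 : ψ 0 = x₀)
    (hψ : ∀ t, 0 ≤ t → HasDerivAt ψ (-(f (ψ t))) t)
    (hpos : ∀ t, 0 ≤ t → 0 < ψ t)
    (hanti : AntitoneOn ψ (Set.Ici 0)) :
    ∀ η, 0 < η → ∃ T, 0 ≤ T ∧ ∀ t, T ≤ t → ψ t < η := by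
  -- enough to find one time where ψ < η
  have key : ∀ η, 0 < η → ∃ T, 0 ≤ T ∧ ψ T < η := by
    intro η hη
    by_contra hcon
    push_neg at hcon
    have hηx : ∀ t, 0 ≤ t → η ≤ ψ t := fun t ht => hcon t ht
    have hub : ∀ t, 0 ≤ t → ψ t ≤ x₀ := by
      intro t ht
      calc ψ t ≤ ψ 0 := hanti (Set.mem_Ici.mpr le_rfl) (Set.mem_Ici.mpr ht) ht
        _ = x₀ := hψ0
    have hηx₀ : η ≤ x₀ := by simpa [hψ0] using hηx 0 le_rfl
    -- min of f on [η, x₀]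
    obtain ⟨z, hz, hmin⟩ := isCompact_Icc.exists_isMinOn (Set.nonempty_Icc.mpr hηx₀)
      (hfc.continuousOn (s := Set.Icc η x₀))
    set c := f z with hc
    have hc0 : 0 < c := hfpos z (lt_of_lt_of_le hη hz.1)
    -- h t = ψ t + c t is antitone on [0, ∞)
    set h : ℝ → ℝ := fun t => ψ t + c * t with hh
    have hh' : ∀ t, 0 ≤ t → HasDerivAt h (-(f (ψ t)) + c) t := by
      intro t ht
      exact ((hψ t ht).add (((hasDerivAt_id t).const_mul c))).congr_deriv (by simp)
    have hhanti : AntitoneOn h (Set.Ici 0) := by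
      apply antitoneOn_of_deriv_nonpos (convex_Ici 0)
      · exact fun t ht => (hh' t ht).continuousAt.continuousWithinAt
      · intro t ht; rw [interior_Ici] at ht
        exact (hh' t ht.le).differentiableAt.differentiableWithinAt
      · intro t ht; rw [interior_Ici] at ht
        rw [(hh' t ht.le).deriv]
        have : c ≤ f (ψ t) := hmin ⟨hηx t ht.le, hub t ht.le⟩
        linarith
    set t := (x₀ - η)/c + 1 with htdef
    have htd : 0 ≤ (x₀ - η)/c := by
      apply div_nonneg _ hc0.le; linarith
    have ht0 : 0 ≤ t := by rw [htdef]; linarith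
    have := hhanti (Set.mem_Ici.mpr le_rfl) (Set.mem_Ici.mpr ht0) ht0
    simp only [hh, hψ0, mul_zero, add_zero] at this
    have hct : c * t = (x₀ - η) + c := by
      rw [htdef, mul_add, mul_one, mul_div_assoc', mul_comm c (x₀ - η), mul_div_assoc,
        div_self hc0.ne', mul_one]
    have hψt := hηx t ht0
    rw [hct] at this
    linarith
  intro η hη
  obtain ⟨T, hT0, hT⟩ := key η hη
  exact ⟨T, hT0, fun t ht => lt_of_le_of_lt (hanti (Set.mem_Ici.mpr hT0)
    (Set.mem_Ici.mpr (le_trans hT0 ht)) ht) hT⟩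


private lemma quad_bound (f : ℝ → ℝ) (a : ℝ)
    (hfd : Differentiable ℝ f)
    (hf2d : Differentiable ℝ (deriv f))
    (hf3c : Continuous (deriv (deriv f)))
    (ha : HasDerivAt f a 0) (hfz : f 0 = 0) :
    ∃ M, 0 ≤ M ∧ ∀ x ∈ Set.Icc (-1:ℝ) 1, |f x - a * x| ≤ M * x^2 := by
  obtain ⟨M, hM⟩ := (isCompact_Icc (a := (-1:ℝ)) (b := 1)).exists_bound_of_continuousOn
    (hf3c.continuousOn)
  have hM0 : 0 ≤ M := le_trans (norm_nonneg _) (hM 0 (by norm_num))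
  have hd0 : deriv f 0 = a := ha.deriv
  have step1 : ∀ x ∈ Set.Icc (-1:ℝ) 1, |deriv f x - a| ≤ M * |x| := by
    intro x hx
    have := (convex_Icc (-1:ℝ) 1).norm_image_sub_le_of_norm_deriv_le
      (fun y _ => hf2d y) (fun y hy => hM y hy) (by norm_num : (0:ℝ) ∈ Set.Icc (-1:ℝ) 1) hx
    simpa [Real.norm_eq_abs, hd0] using this
  refine ⟨M, hM0, fun x hx => ?_⟩
  have habs : |x| ≤ 1 := abs_le.mpr ⟨hx.1, hx.2⟩
  have hsub : Set.uIcc 0 x ⊆ Set.Icc (-1:ℝ) 1 := by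
    intro y hy
    rw [Set.mem_uIcc] at hy
    constructor
    · rcases hy with h | h
      · linarith [hx.1, h.1, abs_nonneg x]
      · linarith [hx.1, h.1]
    · rcases hy with h | h
      · linarith [hx.2, h.2]
      · linarith [h.2]
  have hyx : ∀ y ∈ Set.uIcc 0 x, |y| ≤ |x| := by
    intro y hy
    rw [Set.mem_uIcc] at hy
    rw [abs_le]
    rcases hy with h | h
    · exact ⟨le_trans (neg_nonpos_of_nonneg (abs_nonneg x)) h.1, le_trans h.2 (le_abs_self x)⟩
    · exact ⟨le_trans (neg_abs_le x) h.1, le_trans h.2 (abs_nonneg x)⟩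
  set g : ℝ → ℝ := fun y => f y - a * y with hg
  have hgd : ∀ y, HasDerivAt g (deriv f y - a) y := by
    intro y
    exact ((hfd y).hasDerivAt.sub ((hasDerivAt_id y).const_mul a)).congr_deriv (by simp)
  have := (convex_uIcc (0:ℝ) x).norm_image_sub_le_of_norm_deriv_le
    (fun y _ => (hgd y).differentiableAt)
    (fun y hy => by
      rw [(hgd y).deriv, Real.norm_eq_abs]
      exact le_trans (step1 y (hsub hy)) (mul_le_mul_of_nonneg_left (hyx y hy) hM0))
    (Set.left_mem_uIcc) (Set.right_mem_uIcc)
  simp only [hg, Real.norm_eq_abs, mul_zero, sub_zero, hfz] at this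
  calc |f x - a * x| ≤ M * |x| * |x| := this
    _ = M * x^2 := by rw [mul_assoc, abs_mul_abs_self, sq]


private lemma flow_tendsto (f ψ : ℝ → ℝ) (a η₁ M : ℝ) (hη₁ : 0 < η₁) (ha0 : 0 < a) (hM0 : 0 ≤ M)
    (hslope : ∀ x, 0 ≤ x → x ≤ η₁ → a / 2 * x ≤ f x ∧ f x ≤ 2 * a * x)
    (hquad : ∀ x ∈ Set.Icc (-1:ℝ) 1, |f x - a * x| ≤ M * x^2)
    (hψ : ∀ t, 0 ≤ t → HasDerivAt ψ (-(f (ψ t))) t)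
    (hpos : ∀ t, 0 ≤ t → 0 < ψ t)
    (hsmall : ∀ η, 0 < η → ∃ T, 0 ≤ T ∧ ∀ t, T ≤ t → ψ t < η) :
    ∃ ρ₀ : ℝ, 0 < ρ₀ ∧ Tendsto (fun t => ψ t * Real.exp (a * t)) atTop (nhds ρ₀) := by
  obtain ⟨T₃, hT₃0, hT₃⟩ := hsmall (min η₁ 1) (lt_min hη₁ one_pos)
  have hψη : ∀ t, T₃ ≤ t → ψ t ≤ η₁ := fun t ht => le_trans (hT₃ t ht).le (min_le_left _ _)
  have hψ1 : ∀ t, T₃ ≤ t → ψ t ≤ 1 := fun t ht => le_trans (hT₃ t ht).le (min_le_right _ _)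
  have hpos' : ∀ t, T₃ ≤ t → 0 < ψ t := fun t ht => hpos t (le_trans hT₃0 ht)
  -- (s5) exponential decay:  ψ t * exp(a/2 t) antitone on [T₃, ∞)
  have hu' : ∀ t, 0 ≤ t → HasDerivAt (fun t => ψ t * Real.exp (a/2*t))
      ((-(f (ψ t))) * Real.exp (a/2*t) + ψ t * (Real.exp (a/2*t) * (a/2))) t := by
    intro t ht
    have he : HasDerivAt (fun t => Real.exp (a/2*t)) (Real.exp (a/2*t) * (a/2)) t := by
      simpa using (((hasDerivAt_id t).const_mul (a/2)).exp)
    exact (hψ t ht).mul he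
  have huanti : AntitoneOn (fun t => ψ t * Real.exp (a/2*t)) (Set.Ici T₃) := by
    apply antitoneOn_of_deriv_nonpos (convex_Ici T₃)
    · exact fun t ht => (hu' t (le_trans hT₃0 ht)).continuousAt.continuousWithinAt
    · intro t ht; rw [interior_Ici] at ht
      exact (hu' t (le_trans hT₃0 ht.le)).differentiableAt.differentiableWithinAt
    · intro t ht; rw [interior_Ici] at ht
      rw [(hu' t (le_trans hT₃0 ht.le)).deriv]
      have h1 := (hslope (ψ t) (hpos' t ht.le).le (hψη t ht.le)).1
      have hexp : 0 < Real.exp (a/2*t) := Real.exp_pos _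
      nlinarith
  set C₂ := ψ T₃ * Real.exp (a/2*T₃) with hC₂
  have hC₂0 : 0 < C₂ := by
    have := hpos' T₃ le_rfl; positivity
  have hdecay : ∀ t, T₃ ≤ t → ψ t ≤ C₂ * Real.exp (-(a/2*t)) := by
    intro t ht
    have h := huanti (Set.mem_Ici.mpr le_rfl) (Set.mem_Ici.mpr ht) ht
    simp only at h
    rw [Real.exp_neg, ← div_eq_mul_inv, le_div_iff₀ (Real.exp_pos _)]
    exact h
  -- derivative bound for F t = log (ψ t) + a t
  set D := M * C₂ with hD
  have hD0 : 0 ≤ D := mul_nonneg hM0 hC₂0.le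
  set F : ℝ → ℝ := fun t => Real.log (ψ t) + a * t with hF
  have hF' : ∀ t, T₃ ≤ t → HasDerivAt F (-(f (ψ t)) / ψ t + a) t := by
    intro t ht
    have h1 : HasDerivAt (fun t => Real.log (ψ t)) (-(f (ψ t)) / ψ t) t :=
      (hψ t (le_trans hT₃0 ht)).log (ne_of_gt (hpos' t ht))
    exact (h1.add ((hasDerivAt_id t).const_mul a)).congr_deriv (by simp)
  have hF'bd : ∀ t, T₃ ≤ t → |(-(f (ψ t)) / ψ t + a)| ≤ D * Real.exp (-(a/2*t)) := by
    intro t ht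
    have hψt := hpos' t ht
    have hq := hquad (ψ t) ⟨by linarith [hψ1 t ht, hψt], hψ1 t ht⟩
    have he : -(f (ψ t)) / ψ t + a = -((f (ψ t) - a * ψ t) / ψ t) := by
      field_simp
      ring
    rw [he, abs_neg, abs_div, abs_of_pos hψt]
    rw [div_le_iff₀ hψt]
    calc |f (ψ t) - a * ψ t| ≤ M * (ψ t)^2 := hq
      _ = M * ψ t * ψ t := by ring
      _ ≤ M * (C₂ * Real.exp (-(a/2*t))) * ψ t := by
          apply mul_le_mul_of_nonneg_right _ hψt.le
          exact mul_le_mul_of_nonneg_left (hdecay t ht) hM0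
      _ = D * Real.exp (-(a/2*t)) * ψ t := by rw [hD]; ring
  -- E, G, H
  set E : ℝ → ℝ := fun t => (2*D/a) * Real.exp (-(a/2)*t) with hE
  have hE' : ∀ t, HasDerivAt E (-(D * Real.exp (-(a/2)*t))) t := by
    intro t
    have he : HasDerivAt (fun t => Real.exp (-(a/2)*t)) (Real.exp (-(a/2)*t) * (-(a/2))) t := by
      simpa using (((hasDerivAt_id t).const_mul (-(a/2))).exp)
    have := he.const_mul (2*D/a)
    refine this.congr_deriv ?_
    have hdiv : a / a = 1 := div_self ha0.ne'
    linear_combination (-(D * Real.exp (-(a/2)*t))) * hdiv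
  have hEeq : ∀ t, -(a/2)*t = -(a/2*t) := by intro t; ring
  have hGanti : AntitoneOn (fun t => F t + E t) (Set.Ici T₃) := by
    apply antitoneOn_of_deriv_nonpos (convex_Ici T₃)
    · exact fun t ht => (((hF' t ht).add (hE' t))).continuousAt.continuousWithinAt
    · intro t ht; rw [interior_Ici] at ht
      exact ((hF' t ht.le).add (hE' t)).differentiableAt.differentiableWithinAt
    · intro t ht; rw [interior_Ici] at ht
      rw [show (fun t => F t + E t) = F + E from rfl, ((hF' t ht.le).add (hE' t)).deriv]
      have h1 := hF'bd t ht.le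
      rw [abs_le] at h1
      have := h1.2
      rw [hEeq t]
      linarith
  have hHmono : MonotoneOn (fun t => F t - E t) (Set.Ici T₃) := by
    apply monotoneOn_of_deriv_nonneg (convex_Ici T₃)
    · exact fun t ht => (((hF' t ht).sub (hE' t))).continuousAt.continuousWithinAt
    · intro t ht; rw [interior_Ici] at ht
      exact ((hF' t ht.le).sub (hE' t)).differentiableAt.differentiableWithinAt
    · intro t ht; rw [interior_Ici] at ht
      rw [show (fun t => F t - E t) = F - E from rfl, ((hF' t ht.le).sub (hE' t)).deriv]
      have h1 := hF'bd t ht.le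
      rw [abs_le] at h1
      have := h1.1
      rw [hEeq t]
      linarith
  have hEpos : ∀ t, 0 ≤ E t := by
    intro t
    apply mul_nonneg (by positivity) (Real.exp_pos _).le
  -- the monotone modification
  set H1 : ℝ → ℝ := fun t => F (max t T₃) - E (max t T₃) with hH1
  have hH1mono : Monotone H1 := by
    intro s t hst
    exact hHmono (Set.mem_Ici.mpr (le_max_right _ _)) (Set.mem_Ici.mpr (le_max_right _ _))
      (max_le_max hst le_rfl)
  have hH1bdd : BddAbove (Set.range H1) := by
    refine ⟨F T₃ + E T₃, ?_⟩
    rintro _ ⟨t, rfl⟩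
    calc H1 t ≤ F (max t T₃) + E (max t T₃) := by
          have := hEpos (max t T₃); simp only [hH1]; linarith
      _ ≤ F T₃ + E T₃ := hGanti (Set.mem_Ici.mpr le_rfl)
          (Set.mem_Ici.mpr (le_max_right _ _)) (le_max_right _ _)
  have hH1tend : Tendsto H1 atTop (nhds (⨆ t, H1 t)) := tendsto_atTop_ciSup hH1mono hH1bdd
  set L := ⨆ t, H1 t with hL
  have hHtend : Tendsto (fun t => F t - E t) atTop (nhds L) := by
    apply hH1tend.congr'
    filter_upwards [eventually_ge_atTop T₃] with t ht
    simp [hH1, max_eq_left ht]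
  have hEtend : Tendsto E atTop (nhds 0) := by
    rw [hE]
    have h2 : Tendsto (fun t : ℝ => -(a/2)*t) atTop atBot := by
      exact Tendsto.const_mul_atTop_of_neg (by linarith) tendsto_id
    have := (Real.tendsto_exp_atBot).comp h2
    have h3 := this.const_mul (2*D/a)
    simpa using h3
  have hFtend : Tendsto F atTop (nhds L) := by
    have := hHtend.add hEtend
    simp only [sub_add_cancel, add_zero] at this
    exact this
  refine ⟨Real.exp L, Real.exp_pos L, ?_⟩
  have := (Real.continuous_exp.tendsto L).comp hFtend
  apply this.congr'
  filter_upwards [eventually_ge_atTop T₃] with t ht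
  simp only [Function.comp_apply, hF]
  rw [Real.exp_add, Real.exp_log (hpos' t ht)]


private lemma reflect_props (f : ℝ → ℝ)
    (hfd : Differentiable ℝ f)
    (hf2d : Differentiable ℝ (deriv f))
    (hf3c : Continuous (deriv (deriv f))) :
    Differentiable ℝ (fun x => -f (-x)) ∧
    Differentiable ℝ (deriv (fun x => -f (-x))) ∧
    Continuous (deriv (deriv (fun x => -f (-x)))) ∧
    (∀ x, deriv (fun x => -f (-x)) x = deriv f (-x)) := by
  have hd1 : ∀ x : ℝ, HasDerivAt (fun x => -f (-x)) (deriv f (-x)) x := by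
    intro x
    have h1 : HasDerivAt f (deriv f (-x)) (-x) := (hfd (-x)).hasDerivAt
    have h2 := (h1.comp x (hasDerivAt_neg x)).neg
    exact h2.congr_deriv (by ring)
  have he1 : deriv (fun x => -f (-x)) = fun x => deriv f (-x) :=
    funext fun x => (hd1 x).deriv
  have hd2 : ∀ x : ℝ, HasDerivAt (fun x => deriv f (-x)) (-(deriv (deriv f) (-x))) x := by
    intro x
    have h1 : HasDerivAt (deriv f) (deriv (deriv f) (-x)) (-x) := (hf2d (-x)).hasDerivAt
    exact (h1.comp x (hasDerivAt_neg x)).congr_deriv (by ring)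
  have he2 : deriv (fun x => deriv f (-x)) = fun x => -(deriv (deriv f) (-x)) :=
    funext fun x => (hd2 x).deriv
  refine ⟨fun x => (hd1 x).differentiableAt, ?_, ?_, fun x => (hd1 x).deriv⟩
  · rw [he1]; exact fun x => (hd2 x).differentiableAt
  · rw [he1, he2]
    exact ((hf3c.comp continuous_neg).neg)
private lemma flow_exp_limit (f ψ : ℝ → ℝ) (a x₀ : ℝ)
    (hfd : Differentiable ℝ f)
    (hf2d : Differentiable ℝ (deriv f))
    (hf3c : Continuous (deriv (deriv f)))
    (hf0 : ∀ x, f x = 0 ↔ x = 0)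
    (ha : HasDerivAt f a 0) (ha0 : 0 < a)
    (hx₀ : 0 < x₀) (hψ0 : ψ 0 = x₀)
    (hψ : ∀ t, 0 ≤ t → HasDerivAt ψ (-(f (ψ t))) t) :
    ∃ ρ₀ : ℝ, 0 < ρ₀ ∧ Tendsto (fun t => ψ t * Real.exp (a * t)) atTop (nhds ρ₀) := by
  have hfc : Continuous f := hfd.continuous
  have hfz : f 0 = 0 := (hf0 0).mpr rfl
  obtain ⟨η₁, hη₁, hslope⟩ := slope_facts hfz ha ha0
  -- (s1) sign of f on positives
  have hfpos : ∀ x, 0 < x → 0 < f x := by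
    intro x hx
    by_contra hle
    push_neg at hle
    have hxne : f x ≠ 0 := fun h => (ne_of_gt hx) ((hf0 x).mp h)
    have hxlt : f x < 0 := lt_of_le_of_ne hle hxne
    have hηpos : 0 < f η₁ := lt_of_lt_of_le (by positivity) (hslope η₁ hη₁.le le_rfl).1
    have hiv := intermediate_value_uIcc (a := x) (b := η₁) (f := f) (hfc.continuousOn)
    have h0m : (0:ℝ) ∈ Set.uIcc (f x) (f η₁) := by
      rw [Set.mem_uIcc]; left; exact ⟨hxlt.le, hηpos.le⟩
    obtain ⟨z, hz, hfz'⟩ := hiv h0m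
    have hz0 : z = 0 := (hf0 z).mp hfz'
    have : (0:ℝ) < z := lt_of_lt_of_le (lt_min hx hη₁) (Set.mem_uIcc.mp hz |>.elim
      (fun h => le_trans (min_le_left x η₁) h.1) (fun h => le_trans (min_le_right x η₁) h.1))
    · exact absurd hz0 (ne_of_gt this)
  have hpos : ∀ t, 0 ≤ t → 0 < ψ t := psi_pos f ψ a x₀ η₁ hη₁ hslope ha0 hx₀ hψ0 hψ
  -- (s3) ψ antitone on [0, ∞)
  have hanti : AntitoneOn ψ (Set.Ici 0) := by
    apply antitoneOn_of_deriv_nonpos (convex_Ici 0)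
    · exact fun t ht => (hψ t ht).continuousAt.continuousWithinAt
    · intro t ht
      rw [interior_Ici] at ht
      exact ((hψ t ht.le).differentiableAt).differentiableWithinAt
    · intro t ht
      rw [interior_Ici] at ht
      rw [(hψ t ht.le).deriv]
      have := hfpos _ (hpos t ht.le)
      linarith
  have hsmall := psi_small f ψ x₀ hfc hfpos hx₀ hψ0 hψ hpos hanti
  obtain ⟨M, hM0, hquad⟩ := quad_bound f a hfd hf2d hf3c ha hfz
  exact flow_tendsto f ψ a η₁ M hη₁ ha0 hM0 hslope hquad hψ hpos hsmall
/-- For a regular potential `V` and its gradient flow `ψ` started at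
`x₀ ≠ 0`, with `γ ∈ (0,1)`, `δ_ε = ε^γ`, cut-off time
`t_ε = (1/(2V''(0)))(ln(1/ε) + ln(2V''(0)))`, `t_ε(b) = t_ε + b/V''(0)` and
`t*_ε(b) = t_ε(b) + b δ_ε`, for every `b ∈ ℝ` the quantity
`(sup_{t between t_ε(b) and t*_ε(b)} |ψ_t|)/√ε` converges as `ε → 0⁺` to some finite
strictly positive limit `ρ(b)`. -/
theorem sup_flow_near_cutoff_time_tendsto
    (V ψ : ℝ → ℝ) (x₀ γ : ℝ)
    (hV : ContDiff ℝ 3 V)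
    (hV0 : V 0 = 0)
    (hcrit : ∀ x : ℝ, deriv V x = 0 ↔ x = 0)
    (hV''0 : 0 < deriv (deriv V) 0)
    (hcoercive : Tendsto V (Filter.cocompact ℝ) atTop)
    (hx₀ : x₀ ≠ 0)
    (hψ0 : ψ 0 = x₀)
    (hψ : ∀ t : ℝ, 0 ≤ t → HasDerivAt ψ (-(deriv V (ψ t))) t)
    (hγ0 : 0 < γ) (hγ1 : γ < 1) :
    ∀ b : ℝ, ∃ ρ : ℝ, 0 < ρ ∧
      Tendsto
        (fun ε : ℝ =>
          (⨆ t : (Set.uIcc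
              ((1 / (2 * deriv (deriv V) 0)) *
                  (Real.log (1 / ε) + Real.log (2 * deriv (deriv V) 0)) +
                b / deriv (deriv V) 0)
              ((1 / (2 * deriv (deriv V) 0)) *
                  (Real.log (1 / ε) + Real.log (2 * deriv (deriv V) 0)) +
                b / deriv (deriv V) 0 + b * ε ^ γ) : Set ℝ),
            |ψ t|) / Real.sqrt ε)
        (nhdsWithin 0 (Set.Ioi 0)) (nhds ρ) := by
  intro b
  -- regularity of f := deriv V
  have hV3 : ContDiff ℝ (2+1) V := by norm_num at hV ⊢; exact hV
  have hfC2 : ContDiff ℝ 2 (deriv V) := (contDiff_succ_iff_deriv.mp hV3).2.2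
  have hfC2' : ContDiff ℝ (1+1) (deriv V) := by norm_num at hfC2 ⊢; exact hfC2
  have hfd : Differentiable ℝ (deriv V) := (contDiff_succ_iff_deriv.mp hfC2').1
  have hf2C1 : ContDiff ℝ 1 (deriv (deriv V)) := (contDiff_succ_iff_deriv.mp hfC2').2.2
  have hf2C1' : ContDiff ℝ (0+1) (deriv (deriv V)) := by norm_num at hf2C1 ⊢; exact hf2C1
  have hf2d : Differentiable ℝ (deriv (deriv V)) := (contDiff_succ_iff_deriv.mp hf2C1').1
  have hf3c : Continuous (deriv (deriv (deriv V))) :=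
    ((contDiff_succ_iff_deriv.mp hf2C1').2.2).continuous
  have ha : HasDerivAt (deriv V) (deriv (deriv V) 0) 0 := (hfd 0).hasDerivAt
  have hψcont : ∀ t : ℝ, 0 ≤ t → ContinuousAt ψ t := fun t ht => (hψ t ht).continuousAt
  -- obtain the exponential asymptotics  |ψ t| e^{a t} → ρ₀ > 0
  have key : ∃ ρ₀ : ℝ, 0 < ρ₀ ∧
      Tendsto (fun t => |ψ t| * Real.exp (deriv (deriv V) 0 * t)) atTop (nhds ρ₀) := by
    rcases hx₀.lt_or_gt with hneg | hpos
    · -- x₀ < 0 : reflect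
      obtain ⟨hgd, hg2d, hg3c, hgderiv⟩ := reflect_props (deriv V) hfd hf2d hf3c
      have hg0 : ∀ x : ℝ, -(deriv V) (-x) = 0 ↔ x = 0 := by
        intro x
        rw [neg_eq_zero, hcrit (-x), neg_eq_zero]
      have hga : HasDerivAt (fun x => -(deriv V) (-x)) (deriv (deriv V) 0) 0 := by
        have h1 := (hgd 0).hasDerivAt
        rwa [hgderiv 0, neg_zero] at h1
      have hψ' : ∀ t, 0 ≤ t →
          HasDerivAt (fun t => -ψ t) (-((fun x => -(deriv V) (-x)) ((fun t => -ψ t) t))) t := by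
        intro t ht
        have h := (hψ t ht).neg
        exact h.congr_deriv (by simp)
      obtain ⟨ρ₀, hρ₀, htend⟩ := flow_exp_limit (fun x => -(deriv V) (-x)) (fun t => -ψ t)
        (deriv (deriv V) 0) (-x₀) hgd hg2d hg3c hg0 hga hV''0 (by linarith)
        (by simp [hψ0]) hψ'
      refine ⟨ρ₀, hρ₀, ?_⟩
      have h := htend.abs
      rw [abs_of_pos hρ₀] at h
      refine h.congr fun t => ?_
      rw [abs_mul, abs_neg, abs_of_pos (Real.exp_pos _)]
    · -- x₀ > 0
      obtain ⟨ρ₀, hρ₀, htend⟩ := flow_exp_limit (deriv V) ψ (deriv (deriv V) 0) x₀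
        hfd hf2d hf3c hcrit ha hV''0 hpos hψ0 hψ
      refine ⟨ρ₀, hρ₀, ?_⟩
      have h := htend.abs
      rw [abs_of_pos hρ₀] at h
      refine h.congr fun t => ?_
      rw [abs_mul, abs_of_pos (Real.exp_pos _)]
  obtain ⟨ρ₀, hρ₀, habs⟩ := key
  exact final_assembly ψ (deriv (deriv V) 0) b γ ρ₀ hV''0 hγ0 hψcont hρ₀ habs
end

section
/- For every μ ∈ ℝ, the total variation distance between the Normal distributions N(μ,1) and N(0,1) satisfies ‖N(μ,1) − N(0,1)‖ = (2/√(2π)) ∫₀^{|μ|/2} e^{−x²/2} dx, and in particular ‖N(μ,1) − N(0,1)‖ ≤ |μ|/√(2π). -/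
open MeasureTheory ProbabilityTheory Set

private lemma gpdf_one (m x : ℝ) :
    gaussianPDFReal m 1 x = (Real.sqrt (2 * Real.pi))⁻¹ * Real.exp (-(x - m) ^ 2 / 2) := by
  simp [gaussianPDFReal]

private lemma gpdf_neg (m x : ℝ) : gaussianPDFReal m 1 (-x) = gaussianPDFReal (-m) 1 x := by
  simp only [gaussianPDFReal]
  ring_nf

private lemma setIntegral_Ici_comp_add (F : ℝ → ℝ) (a c : ℝ) :
    ∫ x in Ici a, F (x + c) = ∫ x in Ici (a + c), F x := by
  have h := (measurePreserving_add_right (volume : Measure ℝ) c).setIntegral_preimage_emb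
    (MeasurableEquiv.addRight c).measurableEmbedding F (Ici (a + c))
  rw [← h]
  congr 1
  ext x
  simp

private lemma setIntegral_Iic_comp_neg (F : ℝ → ℝ) (a : ℝ) :
    ∫ x in Ici (-a), F (-x) = ∫ x in Iic a, F x := by
  have h := (Measure.measurePreserving_neg (volume : Measure ℝ)).setIntegral_preimage_emb
    (MeasurableEquiv.neg ℝ).measurableEmbedding F (Iic a)
  rw [← h]
  congr 1
  ext x
  simp [neg_le]

private lemma key_integral {μ : ℝ} (hμ : 0 ≤ μ) :
    ∫ x in Ici (μ / 2), (gaussianPDFReal μ 1 x - gaussianPDFReal 0 1 x) =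
      (2 / Real.sqrt (2 * Real.pi)) * ∫ x in (0:ℝ)..(μ / 2), Real.exp (-x ^ 2 / 2) := by
  have hint : ∀ (m : ℝ) (t : Set ℝ), IntegrableOn (gaussianPDFReal m 1) t :=
    fun m t => (integrable_gaussianPDFReal m 1).integrableOn
  rw [integral_sub (hint μ _) (hint 0 _)]
  have h1 : ∫ x in Ici (μ/2), gaussianPDFReal μ 1 x
      = ∫ x in Ici (-(μ/2)), gaussianPDFReal 0 1 x := by
    have h := setIntegral_Ici_comp_add (gaussianPDFReal 0 1) (μ/2) (-μ)
    have he : μ/2 + -μ = -(μ/2) := by ring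
    rw [he] at h
    rw [← h]
    refine setIntegral_congr_fun measurableSet_Ici fun x _ => ?_
    rw [← sub_eq_add_neg, gaussianPDFReal_sub, zero_add]
  rw [h1]
  have h2 : ∫ x in Ici (-(μ/2)), gaussianPDFReal 0 1 x
      = (∫ x in Ico (-(μ/2)) (μ/2), gaussianPDFReal 0 1 x)
        + ∫ x in Ici (μ/2), gaussianPDFReal 0 1 x := by
    rw [← setIntegral_union ((Iio_disjoint_Ici le_rfl).mono_left Ico_subset_Iio_self)
      measurableSet_Ici (hint 0 _) (hint 0 _), Ico_union_Ici_eq_Ici (by linarith)]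
  rw [h2, add_sub_cancel_right]
  rw [integral_Ico_eq_integral_Ioo, ← integral_Ioc_eq_integral_Ioo,
    ← intervalIntegral.integral_of_le (by linarith : -(μ/2) ≤ μ/2)]
  have h3 : ∫ x in (-(μ/2))..(μ/2), gaussianPDFReal 0 1 x
      = (∫ x in (-(μ/2))..(0:ℝ), gaussianPDFReal 0 1 x)
        + ∫ x in (0:ℝ)..(μ/2), gaussianPDFReal 0 1 x :=
    (intervalIntegral.integral_add_adjacent_intervals
      (integrable_gaussianPDFReal 0 1).intervalIntegrable
      (integrable_gaussianPDFReal 0 1).intervalIntegrable).symm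
  have h4 : ∫ x in (-(μ/2))..(0:ℝ), gaussianPDFReal 0 1 x
      = ∫ x in (0:ℝ)..(μ/2), gaussianPDFReal 0 1 x := by
    have h := intervalIntegral.integral_comp_neg (a := (0:ℝ)) (b := μ/2) (gaussianPDFReal 0 1)
    rw [neg_zero] at h
    rw [← h]
    refine intervalIntegral.integral_congr fun x _ => ?_
    rw [gpdf_neg, neg_zero]
  have h5 : ∀ J : ℝ, (∫ x in (0:ℝ)..J, gaussianPDFReal 0 1 x)
      = (Real.sqrt (2 * Real.pi))⁻¹ * ∫ x in (0:ℝ)..J, Real.exp (-x ^ 2 / 2) := by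
    intro J
    rw [← intervalIntegral.integral_const_mul]
    refine intervalIntegral.integral_congr fun x _ => ?_
    rw [gpdf_one, sub_zero]
  rw [h3, h4, h5]
  ring

private lemma setIntegral_diff_le {f g : ℝ → ℝ} (hf : Integrable f) (hg : Integrable g)
    {S : Set ℝ} (hS : MeasurableSet S) (hpos : ∀ x ∈ S, g x ≤ f x)
    (hneg : ∀ x ∉ S, f x ≤ g x) (s : Set ℝ) (hs : MeasurableSet s) :
    ∫ x in s, (f x - g x) ≤ ∫ x in S, (f x - g x) := by
  have hfg : Integrable (fun x => f x - g x) := hf.sub hg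
  have hsplit := integral_inter_add_diff (f := fun x => f x - g x) (s := s) hS hfg.integrableOn
  have hle1 : ∫ x in s \ S, (f x - g x) ≤ 0 :=
    setIntegral_nonpos (hs.diff hS) fun x hx => sub_nonpos.2 (hneg x hx.2)
  have hle2 : ∫ x in s ∩ S, (f x - g x) ≤ ∫ x in S, (f x - g x) := by
    refine setIntegral_mono_set hfg.integrableOn ?_ (HasSubset.Subset.eventuallyLE inter_subset_right)
    exact (ae_restrict_iff' hS).2 (ae_of_all _ fun x hx => sub_nonneg.2 (hpos x hx))
  linarith

private lemma abs_setIntegral_diff_le {f g : ℝ → ℝ} (hf : Integrable f) (hg : Integrable g)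
    (htot : ∫ x, f x = ∫ x, g x)
    {S : Set ℝ} (hS : MeasurableSet S) (hpos : ∀ x ∈ S, g x ≤ f x)
    (hneg : ∀ x ∉ S, f x ≤ g x) (s : Set ℝ) (hs : MeasurableSet s) :
    |∫ x in s, (f x - g x)| ≤ ∫ x in S, (f x - g x) := by
  have hfg : Integrable (fun x => f x - g x) := hf.sub hg
  have hsneg : ∀ t : Set ℝ, ∫ x in t, (g x - f x) = - ∫ x in t, (f x - g x) := by
    intro t
    rw [← integral_neg]
    simp only [neg_sub]
  rw [abs_le]
  constructor
  · have h2 := setIntegral_diff_le hg hf hS.compl (fun x hx => hneg x hx)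
      (fun x hx => hpos x (not_not.1 hx)) s hs
    have h4 := integral_add_compl hS hfg
    have h0 : ∫ x, (f x - g x) = 0 := by rw [integral_sub hf hg, htot, sub_self]
    rw [hsneg, hsneg] at h2
    linarith [h4.trans h0]
  · exact setIntegral_diff_le hf hg hS hpos hneg s hs

private lemma gaussian_toReal (m : ℝ) (s : Set ℝ) :
    ((gaussianReal m 1) s).toReal = ∫ x in s, gaussianPDFReal m 1 x := by
  rw [gaussianReal_apply_eq_integral m one_ne_zero s,
    ENNReal.toReal_ofReal (integral_nonneg fun x => gaussianPDFReal_nonneg m 1 x)]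

/-- For every `μ ∈ ℝ`,
`‖N(μ,1) − N(0,1)‖ = (2/√(2π)) ∫₀^{|μ|/2} e^{-x²/2} dx`, and in particular
`‖N(μ,1) − N(0,1)‖ ≤ |μ|/√(2π)`. -/
theorem tvDist_gaussian_one
    (μ : ℝ) :
    tvDist (gaussianReal μ 1) (gaussianReal 0 1) =
        (2 / Real.sqrt (2 * Real.pi)) *
          ∫ x in (0:ℝ)..(|μ| / 2), Real.exp (-x ^ 2 / 2) ∧
      tvDist (gaussianReal μ 1) (gaussianReal 0 1) ≤ |μ| / Real.sqrt (2 * Real.pi) := by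
  set T : ℝ := (2 / Real.sqrt (2 * Real.pi)) *
      ∫ x in (0:ℝ)..(|μ| / 2), Real.exp (-x ^ 2 / 2) with hTdef
  have hftot : ∫ x, gaussianPDFReal μ 1 x = ∫ x, gaussianPDFReal 0 1 x := by
    rw [integral_gaussianPDFReal_eq_one μ one_ne_zero,
      integral_gaussianPDFReal_eq_one 0 one_ne_zero]
  -- witness set S and the two key facts
  obtain ⟨S, hS, hposneg, hval⟩ :
      ∃ S : Set ℝ, MeasurableSet S ∧
        ((∀ x ∈ S, gaussianPDFReal 0 1 x ≤ gaussianPDFReal μ 1 x) ∧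
          ∀ x ∉ S, gaussianPDFReal μ 1 x ≤ gaussianPDFReal 0 1 x) ∧
        ∫ x in S, (gaussianPDFReal μ 1 x - gaussianPDFReal 0 1 x) = T := by
    rcases le_or_gt 0 μ with hμ | hμ
    · refine ⟨Ici (μ/2), measurableSet_Ici, ⟨?_, ?_⟩, ?_⟩
      · intro x hx
        have hx' : μ/2 ≤ x := hx
        rw [gpdf_one, gpdf_one]
        refine mul_le_mul_of_nonneg_left ?_ (inv_nonneg.2 (Real.sqrt_nonneg _))
        refine Real.exp_le_exp.2 ?_
        nlinarith [mul_nonneg hμ (by linarith : (0:ℝ) ≤ 2*x - μ)]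
      · intro x hx
        have hx' : x < μ/2 := lt_of_not_ge hx
        rw [gpdf_one, gpdf_one]
        refine mul_le_mul_of_nonneg_left ?_ (inv_nonneg.2 (Real.sqrt_nonneg _))
        refine Real.exp_le_exp.2 ?_
        nlinarith [mul_nonpos_of_nonneg_of_nonpos hμ (by linarith : 2*x - μ ≤ 0)]
      · rw [hTdef, abs_of_nonneg hμ]
        exact key_integral hμ
    · refine ⟨Iic (μ/2), measurableSet_Iic, ⟨?_, ?_⟩, ?_⟩
      · intro x hx
        have hx' : x ≤ μ/2 := hx
        rw [gpdf_one, gpdf_one]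
        refine mul_le_mul_of_nonneg_left ?_ (inv_nonneg.2 (Real.sqrt_nonneg _))
        refine Real.exp_le_exp.2 ?_
        nlinarith [mul_nonneg (by linarith : (0:ℝ) ≤ -μ) (by linarith : (0:ℝ) ≤ μ - 2*x)]
      · intro x hx
        have hx' : μ/2 < x := lt_of_not_ge hx
        rw [gpdf_one, gpdf_one]
        refine mul_le_mul_of_nonneg_left ?_ (inv_nonneg.2 (Real.sqrt_nonneg _))
        refine Real.exp_le_exp.2 ?_
        nlinarith [mul_nonpos_of_nonneg_of_nonpos (by linarith : (0:ℝ) ≤ -μ)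
          (by linarith : μ - 2*x ≤ 0)]
      · have hrefl := setIntegral_Iic_comp_neg
          (fun x => gaussianPDFReal μ 1 x - gaussianPDFReal 0 1 x) (μ/2)
        rw [← hrefl]
        have hcongr : ∫ x in Ici (-(μ/2)),
            (gaussianPDFReal μ 1 (-x) - gaussianPDFReal 0 1 (-x))
            = ∫ x in Ici (-(μ/2)),
              (gaussianPDFReal (-μ) 1 x - gaussianPDFReal 0 1 x) := by
          refine setIntegral_congr_fun measurableSet_Ici fun x _ => ?_
          rw [gpdf_neg, gpdf_neg, neg_zero]
        rw [hcongr]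
        have h := key_integral (μ := -μ) (by linarith)
        rw [neg_div] at h
        rw [h, hTdef, abs_of_neg hμ, neg_div]
  -- the uniform bound
  have main : ∀ A : {s : Set ℝ // MeasurableSet s},
      |((gaussianReal μ 1) A.1).toReal - ((gaussianReal 0 1) A.1).toReal| ≤ T := by
    rintro ⟨s, hs⟩
    have hdiff : ((gaussianReal μ 1) s).toReal - ((gaussianReal 0 1) s).toReal
        = ∫ x in s, (gaussianPDFReal μ 1 x - gaussianPDFReal 0 1 x) := by
      rw [gaussian_toReal, gaussian_toReal,
        integral_sub (integrable_gaussianPDFReal μ 1).integrableOn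
          (integrable_gaussianPDFReal 0 1).integrableOn]
    rw [hdiff, ← hval]
    exact abs_setIntegral_diff_le (integrable_gaussianPDFReal μ 1)
      (integrable_gaussianPDFReal 0 1) hftot hS hposneg.1 hposneg.2 s hs
  have hbdd : BddAbove (Set.range fun A : {s : Set ℝ // MeasurableSet s} =>
      |((gaussianReal μ 1) A.1).toReal - ((gaussianReal 0 1) A.1).toReal|) := by
    refine ⟨T, ?_⟩
    rintro _ ⟨A, rfl⟩
    exact main A
  have hEq : tvDist (gaussianReal μ 1) (gaussianReal 0 1) = T := by
    refine le_antisymm (ciSup_le main) ?_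
    have hwit : ((gaussianReal μ 1) S).toReal - ((gaussianReal 0 1) S).toReal = T := by
      rw [gaussian_toReal, gaussian_toReal,
        ← integral_sub (integrable_gaussianPDFReal μ 1).integrableOn
          (integrable_gaussianPDFReal 0 1).integrableOn]
      exact hval
    calc T ≤ |((gaussianReal μ 1) S).toReal - ((gaussianReal 0 1) S).toReal| := by
            rw [hwit]; exact le_abs_self T
      _ ≤ tvDist (gaussianReal μ 1) (gaussianReal 0 1) :=
            le_ciSup hbdd (⟨S, hS⟩ : {s : Set ℝ // MeasurableSet s})
  refine ⟨hEq, ?_⟩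
  rw [hEq]
  have hI : (∫ x in (0:ℝ)..(|μ|/2), Real.exp (-x ^ 2 / 2)) ≤ |μ|/2 := by
    have hmono : (∫ x in (0:ℝ)..(|μ|/2), Real.exp (-x ^ 2 / 2))
        ≤ ∫ _x in (0:ℝ)..(|μ|/2), (1:ℝ) := by
      refine intervalIntegral.integral_mono_on (by positivity) ?_
        intervalIntegrable_const fun x _ => ?_
      · exact (Real.continuous_exp.comp (by continuity)).intervalIntegrable _ _
      · exact Real.exp_le_one_iff.2 (by nlinarith [sq_nonneg x])
    simpa using hmono
  have hsq : 0 < Real.sqrt (2 * Real.pi) := Real.sqrt_pos.2 (by positivity)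
  have h2 : T ≤ (2 / Real.sqrt (2 * Real.pi)) * (|μ|/2) := by
    rw [hTdef]
    exact mul_le_mul_of_nonneg_left hI (by positivity)
  calc T ≤ (2 / Real.sqrt (2 * Real.pi)) * (|μ|/2) := h2
    _ = |μ| / Real.sqrt (2 * Real.pi) := by field_simp
end

section
/- Let (Ω, ℱ, ℙ) be a probability space, let X, Y be integrable real random variables, let σ > 0, and let Z be a real random variable with distribution N(0, σ²) that is independent of the σ-algebra generated by X and Y. Then the total variation distance between the laws of X + Z and Y + Z satisfies ‖law(X + Z) − law(Y + Z)‖ ≤ (1/(√(2π) σ)) E[|X − Y|]. -/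
open MeasureTheory ProbabilityTheory

open Set
open scoped NNReal ENNReal

section AuxGauss
variable {v : ℝ≥0}

lemma pdf_le_const (v : ℝ≥0) (t : ℝ) :
    gaussianPDFReal 0 v t ≤ (Real.sqrt (2 * Real.pi * v))⁻¹ := by
  rw [gaussianPDFReal]
  nth_rewrite 2 [← mul_one ((Real.sqrt (2 * Real.pi * v))⁻¹)]
  apply mul_le_mul_of_nonneg_left _ (by positivity)
  rw [Real.exp_le_one_iff]
  apply div_nonpos_of_nonpos_of_nonneg (neg_nonpos.mpr (sq_nonneg _)) (by positivity)

lemma pdf_mono {v : ℝ≥0} (hv : v ≠ 0) {x y t : ℝ} (h : (t - x)^2 ≤ (t - y)^2) :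
    gaussianPDFReal y v t ≤ gaussianPDFReal x v t := by
  rw [gaussianPDFReal, gaussianPDFReal]
  apply mul_le_mul_of_nonneg_left _ (by positivity)
  apply Real.exp_le_exp.mpr
  have hv' : (0:ℝ) < 2 * v := by
    have : (0:ℝ) < (v:ℝ) := lt_of_le_of_ne (v.coe_nonneg) (by exact_mod_cast (Ne.symm hv))
    linarith
  rw [div_le_div_iff_of_pos_right hv']
  linarith

lemma gauss_set_le (v : ℝ≥0) (hv : v ≠ 0) {s : Set ℝ} {d : ℝ} (hd : 0 ≤ d)
    (hvol : volume s ≤ ENNReal.ofReal d) :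
    gaussianReal 0 v s ≤ ENNReal.ofReal (d * (Real.sqrt (2 * Real.pi * v))⁻¹) := by
  rw [gaussianReal_apply 0 hv]
  calc ∫⁻ t in s, gaussianPDF 0 v t
      ≤ ∫⁻ _ in s, ENNReal.ofReal ((Real.sqrt (2 * Real.pi * v))⁻¹) := by
        refine setLIntegral_mono measurable_const fun t _ => ?_
        exact ENNReal.ofReal_le_ofReal (pdf_le_const v t)
    _ = ENNReal.ofReal ((Real.sqrt (2 * Real.pi * v))⁻¹) * volume s := by
        rw [setLIntegral_const]
    _ ≤ ENNReal.ofReal ((Real.sqrt (2 * Real.pi * v))⁻¹) * ENNReal.ofReal d := by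
        exact mul_le_mul_right hvol _
    _ = ENNReal.ofReal (d * (Real.sqrt (2 * Real.pi * v))⁻¹) := by
        rw [← ENNReal.ofReal_mul (by positivity), mul_comm]

lemma gauss_comp_le {v : ℝ≥0} (hv : v ≠ 0) {x y : ℝ} (hxy : x ≤ y)
    {B : Set ℝ} (hB : B ⊆ Set.Iic ((x + y) / 2)) :
    gaussianReal y v B ≤ gaussianReal x v B := by
  rw [gaussianReal_apply x hv, gaussianReal_apply y hv]
  refine setLIntegral_mono (measurable_gaussianPDF _ _) fun t ht => ?_
  refine ENNReal.ofReal_le_ofReal (pdf_mono hv ?_)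
  have h := hB ht
  simp only [mem_Iic] at h
  nlinarith

lemma gauss_comp_ge {v : ℝ≥0} (hv : v ≠ 0) {x y : ℝ} (hxy : x ≤ y)
    {B : Set ℝ} (hB : B ⊆ Set.Ici ((x + y) / 2)) :
    gaussianReal x v B ≤ gaussianReal y v B := by
  rw [gaussianReal_apply x hv, gaussianReal_apply y hv]
  refine setLIntegral_mono (measurable_gaussianPDF _ _) fun t ht => ?_
  refine ENNReal.ofReal_le_ofReal (pdf_mono hv ?_)
  have h := hB ht
  simp only [mem_Ici] at h
  nlinarith

lemma gauss_apply_shift (v : ℝ≥0) (x : ℝ) {s : Set ℝ} (hs : MeasurableSet s) :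
    gaussianReal x v s = gaussianReal 0 v ((· + x) ⁻¹' s) := by
  have h : (gaussianReal 0 v).map (· + x) = gaussianReal x v := by
    simpa using gaussianReal_map_add_const (μ := 0) (v := v) x
  rw [← h, Measure.map_apply (measurable_add_const x) hs]

lemma gauss_shift_le {v : ℝ≥0} (hv : v ≠ 0) {x y : ℝ} (hxy : x ≤ y)
    {A : Set ℝ} (hA : MeasurableSet A) :
    gaussianReal x v A ≤ gaussianReal y v A
      + ENNReal.ofReal ((y - x) * (Real.sqrt (2 * Real.pi * v))⁻¹) := by
  set m : ℝ := (x + y) / 2 with hm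
  set S : Set ℝ := Iic m with hSdef
  have hS : MeasurableSet S := measurableSet_Iic
  set δ := ENNReal.ofReal ((y - x) * (Real.sqrt (2 * Real.pi * v))⁻¹) with hδ
  -- the interval bound
  have key : gaussianReal x v S ≤ gaussianReal y v S + δ := by
    rw [gauss_apply_shift v x hS, gauss_apply_shift v y hS]
    have hpx : (· + x) ⁻¹' S = Iic (m - x) := by ext t; simp [hSdef, le_sub_iff_add_le]
    have hpy : (· + y) ⁻¹' S = Iic (m - y) := by ext t; simp [hSdef, le_sub_iff_add_le]
    rw [hpx, hpy]
    have hmm : m - y ≤ m - x := by linarith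
    have hun : Iic (m - x) = Iic (m - y) ∪ Ioc (m - y) (m - x) :=
      (Iic_union_Ioc_eq_Iic hmm).symm
    calc gaussianReal 0 v (Iic (m - x))
        ≤ gaussianReal 0 v (Iic (m - y)) + gaussianReal 0 v (Ioc (m - y) (m - x)) := by
          rw [hun]; exact measure_union_le _ _
      _ ≤ gaussianReal 0 v (Iic (m - y)) + δ := by
          refine add_le_add_right ?_ _
          rw [hδ]
          have : (y - x) = (m - x) - (m - y) := by ring
          rw [this]
          exact gauss_set_le v hv (by linarith) (by rw [Real.volume_Ioc])
  -- combine
  have c1x : gaussianReal x v (S ∩ A) + gaussianReal x v (S \ A) = gaussianReal x v S :=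
    measure_inter_add_diff S hA
  have c1y : gaussianReal y v (S ∩ A) + gaussianReal y v (S \ A) = gaussianReal y v S :=
    measure_inter_add_diff S hA
  have c2 : gaussianReal y v (S \ A) ≤ gaussianReal x v (S \ A) :=
    gauss_comp_le hv hxy (fun t ht => ht.1)
  have h3 : gaussianReal x v (S ∩ A) ≤ gaussianReal y v (S ∩ A) + δ := by
    rw [← ENNReal.add_le_add_iff_right (measure_ne_top (gaussianReal y v) (S \ A))]
    calc gaussianReal x v (S ∩ A) + gaussianReal y v (S \ A)
        ≤ gaussianReal x v (S ∩ A) + gaussianReal x v (S \ A) := add_le_add_right c2 _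
      _ = gaussianReal x v S := c1x
      _ ≤ gaussianReal y v S + δ := key
      _ = gaussianReal y v (S ∩ A) + gaussianReal y v (S \ A) + δ := by rw [c1y]
      _ = gaussianReal y v (S ∩ A) + δ + gaussianReal y v (S \ A) := by ring
  have h2 : gaussianReal x v (A \ S) ≤ gaussianReal y v (A \ S) := by
    refine gauss_comp_ge hv hxy (fun t ht => ?_)
    have := ht.2
    simp only [hSdef, mem_Iic, not_le] at this
    exact le_of_lt this
  calc gaussianReal x v A
      = gaussianReal x v (S ∩ A) + gaussianReal x v (A \ S) := by
        rw [inter_comm, ← measure_inter_add_diff A hS]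
    _ ≤ (gaussianReal y v (S ∩ A) + δ) + gaussianReal y v (A \ S) := add_le_add h3 h2
    _ = (gaussianReal y v (S ∩ A) + gaussianReal y v (A \ S)) + δ := by ring
    _ = gaussianReal y v A + δ := by
        rw [inter_comm, ← measure_inter_add_diff A hS]

lemma gauss_shift_ge (hv : v ≠ 0) {x y : ℝ} (hxy : x ≤ y)
    {A : Set ℝ} (hA : MeasurableSet A) :
    gaussianReal y v A ≤ gaussianReal x v A
      + ENNReal.ofReal ((y - x) * (Real.sqrt (2 * Real.pi * v))⁻¹) := by
  set m : ℝ := (x + y) / 2 with hm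
  set S : Set ℝ := Ici m with hSdef
  have hS : MeasurableSet S := measurableSet_Ici
  set δ := ENNReal.ofReal ((y - x) * (Real.sqrt (2 * Real.pi * v))⁻¹) with hδ
  have key : gaussianReal y v S ≤ gaussianReal x v S + δ := by
    rw [gauss_apply_shift v x hS, gauss_apply_shift v y hS]
    have hpx : (· + x) ⁻¹' S = Ici (m - x) := by ext t; simp [hSdef, sub_le_iff_le_add]
    have hpy : (· + y) ⁻¹' S = Ici (m - y) := by ext t; simp [hSdef, sub_le_iff_le_add]
    rw [hpx, hpy]
    have hmm : m - y ≤ m - x := by linarith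
    have hun : Ici (m - y) = Ico (m - y) (m - x) ∪ Ici (m - x) :=
      (Ico_union_Ici_eq_Ici hmm).symm
    calc gaussianReal 0 v (Ici (m - y))
        ≤ gaussianReal 0 v (Ico (m - y) (m - x)) + gaussianReal 0 v (Ici (m - x)) := by
          rw [hun]; exact measure_union_le _ _
      _ ≤ gaussianReal 0 v (Ici (m - x)) + δ := by
          rw [add_comm]
          refine add_le_add_right ?_ _
          rw [hδ]
          have : (y - x) = (m - x) - (m - y) := by ring
          rw [this]
          exact gauss_set_le v hv (by linarith) (by rw [Real.volume_Ico])
  have c1x : gaussianReal x v (S ∩ A) + gaussianReal x v (S \ A) = gaussianReal x v S :=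
    measure_inter_add_diff S hA
  have c1y : gaussianReal y v (S ∩ A) + gaussianReal y v (S \ A) = gaussianReal y v S :=
    measure_inter_add_diff S hA
  have c2 : gaussianReal x v (S \ A) ≤ gaussianReal y v (S \ A) :=
    gauss_comp_ge hv hxy (fun t ht => ht.1)
  have h3 : gaussianReal y v (S ∩ A) ≤ gaussianReal x v (S ∩ A) + δ := by
    rw [← ENNReal.add_le_add_iff_right (measure_ne_top (gaussianReal x v) (S \ A))]
    calc gaussianReal y v (S ∩ A) + gaussianReal x v (S \ A)
        ≤ gaussianReal y v (S ∩ A) + gaussianReal y v (S \ A) := add_le_add_right c2 _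
      _ = gaussianReal y v S := c1y
      _ ≤ gaussianReal x v S + δ := key
      _ = gaussianReal x v (S ∩ A) + gaussianReal x v (S \ A) + δ := by rw [c1x]
      _ = gaussianReal x v (S ∩ A) + δ + gaussianReal x v (S \ A) := by ring
  have h2 : gaussianReal y v (A \ S) ≤ gaussianReal x v (A \ S) := by
    refine gauss_comp_le hv hxy (fun t ht => ?_)
    have := ht.2
    simp only [hSdef, mem_Ici, not_le] at this
    exact le_of_lt this
  calc gaussianReal y v A
      = gaussianReal y v (S ∩ A) + gaussianReal y v (A \ S) := by
        rw [inter_comm, ← measure_inter_add_diff A hS]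
    _ ≤ (gaussianReal x v (S ∩ A) + δ) + gaussianReal x v (A \ S) := add_le_add h3 h2
    _ = (gaussianReal x v (S ∩ A) + gaussianReal x v (A \ S)) + δ := by ring
    _ = gaussianReal x v A + δ := by
        rw [inter_comm, ← measure_inter_add_diff A hS]

lemma gauss_diff_abs (hv : v ≠ 0) (x y : ℝ) {A : Set ℝ} (hA : MeasurableSet A) :
    |(gaussianReal x v A).toReal - (gaussianReal y v A).toReal|
      ≤ |x - y| * (Real.sqrt (2 * Real.pi * v))⁻¹ := by
  have main : ∀ a b : ℝ, a ≤ b →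
      |(gaussianReal a v A).toReal - (gaussianReal b v A).toReal|
        ≤ |a - b| * (Real.sqrt (2 * Real.pi * v))⁻¹ := by
    intro a b hab
    have habs : |a - b| = b - a := by rw [abs_sub_comm]; exact abs_of_nonneg (by linarith)
    rw [habs, abs_sub_le_iff]
    have hfin1 : gaussianReal a v A ≠ ∞ := measure_ne_top _ _
    have hfin2 : gaussianReal b v A ≠ ∞ := measure_ne_top _ _
    have hle : ∀ (p q : Measure ℝ), p A ≤ q A + ENNReal.ofReal ((b - a) * (Real.sqrt (2 * Real.pi * v))⁻¹) → p A ≠ ∞ → q A ≠ ∞ →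
        (p A).toReal - (q A).toReal ≤ (b - a) * (Real.sqrt (2 * Real.pi * v))⁻¹ := by
      intro p q h hp hq
      have := ENNReal.toReal_mono (by finiteness) h
      rw [ENNReal.toReal_add hq ENNReal.ofReal_ne_top, ENNReal.toReal_ofReal (mul_nonneg (by linarith) (by positivity))] at this
      linarith
    constructor
    · exact hle _ _ (gauss_shift_le hv hab hA) hfin1 hfin2
    · exact hle _ _ (gauss_shift_ge hv hab hA) hfin2 hfin1
  rcases le_total x y with h | h
  · exact main x y h
  · rw [abs_sub_comm, abs_sub_comm x y]; exact main y x h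

end AuxGauss

/-- Gaussian smoothing bound. If `X, Y` are integrable real random
variables, `σ > 0` and `Z ∼ N(0,σ²)` is independent of `σ(X,Y)`, then
`‖law(X+Z) − law(Y+Z)‖ ≤ (1/(√(2π) σ)) E|X − Y|`. -/
theorem tvDist_add_gaussian_le
    {Ω : Type*} [MeasurableSpace Ω] (P : Measure Ω) [IsProbabilityMeasure P]
    (X Y Z : Ω → ℝ) (σ : ℝ) (hσ : 0 < σ)
    (hX : Measurable X) (hY : Measurable Y) (hZ : Measurable Z)
    (hXint : Integrable X P) (hYint : Integrable Y P)
    (hZlaw : Measure.map Z P = gaussianReal 0 (σ ^ 2).toNNReal)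
    (hindep : IndepFun Z (fun ω => (X ω, Y ω)) P) :
    tvDist (Measure.map (fun ω => X ω + Z ω) P)
        (Measure.map (fun ω => Y ω + Z ω) P) ≤
      (1 / (Real.sqrt (2 * Real.pi) * σ)) * ∫ ω, |X ω - Y ω| ∂P := by
  set V : ℝ≥0 := (σ ^ 2).toNNReal with hVdef
  have hVcoe : (V : ℝ) = σ ^ 2 := Real.coe_toNNReal _ (sq_nonneg σ)
  have hV : V ≠ 0 := by
    intro h
    rw [h] at hVcoe
    simp at hVcoe
    nlinarith
  set c : ℝ := (Real.sqrt (2 * Real.pi * V))⁻¹ with hcdef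
  have hc : c = 1 / (Real.sqrt (2 * Real.pi) * σ) := by
    rw [hcdef, hVcoe, Real.sqrt_mul (by positivity), Real.sqrt_sq hσ.le, one_div]
  set W : Ω → ℝ × ℝ := fun ω => (X ω, Y ω) with hWdef
  have hW : Measurable W := hX.prodMk hY
  set ν : Measure (ℝ × ℝ) := P.map W with hνdef
  haveI : IsProbabilityMeasure ν := Measure.isProbabilityMeasure_map hW.aemeasurable
  have hprod : P.map (fun ω => (W ω, Z ω)) = ν.prod (gaussianReal 0 V) := by
    have h := (indepFun_iff_map_prod_eq_prod_map_map hW.aemeasurable hZ.aemeasurable).mp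
      hindep.symm
    rw [h, hZlaw]
  -- the integral ∫ |X - Y| is nonneg
  have hXYν : Integrable (fun w : ℝ × ℝ => |w.1 - w.2|) ν := by
    rw [hνdef]
    refine (integrable_map_measure ?_ hW.aemeasurable).mpr ?_
    · exact ((measurable_fst.sub measurable_snd).abs).aestronglyMeasurable
    · exact (hXint.sub hYint).abs
  have hXYeq : ∫ w, |w.1 - w.2| ∂ν = ∫ ω, |X ω - Y ω| ∂P := by
    rw [hνdef]
    exact integral_map hW.aemeasurable
      ((measurable_fst.sub measurable_snd).abs).aestronglyMeasurable
  -- main bound per measurable set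
  have key : ∀ A : Set ℝ, MeasurableSet A →
      |((P.map (fun ω => X ω + Z ω)) A).toReal - ((P.map (fun ω => Y ω + Z ω)) A).toReal|
        ≤ c * ∫ ω, |X ω - Y ω| ∂P := by
    intro A hA
    have rep : ∀ (g : ℝ × ℝ → ℝ), Measurable g →
        P.map (fun ω => g (W ω) + Z ω) A = ∫⁻ w, gaussianReal (g w) V A ∂ν := by
      intro g hg
      have hBmeas : MeasurableSet {p : (ℝ × ℝ) × ℝ | g p.1 + p.2 ∈ A} :=
        ((hg.comp measurable_fst).add measurable_snd) hA
      rw [Measure.map_apply (f := fun ω => g (W ω) + Z ω)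
        ((hg.comp hW).add hZ) hA]
      have hpre : (fun ω => g (W ω) + Z ω) ⁻¹' A
          = (fun ω => (W ω, Z ω)) ⁻¹' {p : (ℝ × ℝ) × ℝ | g p.1 + p.2 ∈ A} := rfl
      rw [hpre, ← Measure.map_apply (hW.prodMk hZ) hBmeas, hprod,
        Measure.prod_apply hBmeas]
      refine lintegral_congr fun w => ?_
      have hpre2 : (Prod.mk w ⁻¹' {p : (ℝ × ℝ) × ℝ | g p.1 + p.2 ∈ A})
          = (g w + ·) ⁻¹' A := rfl
      rw [hpre2, ← Measure.map_apply (measurable_const_add _) hA,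
        gaussianReal_map_const_add, zero_add]
    have hGmeas : Measurable (fun x : ℝ => gaussianReal x V A) := by
      have heq : (fun x : ℝ => gaussianReal x V A)
          = fun x => ∫⁻ t in A, gaussianPDF x V t := funext fun x => gaussianReal_apply x hV A
      rw [heq]
      apply Measurable.lintegral_prod_right (f := fun x t => gaussianPDF x V t)
      simp only [Function.uncurry, gaussianPDF, gaussianPDFReal]
      apply Measurable.ennreal_ofReal
      fun_prop
    have hmeas1 : Measurable (fun w : ℝ × ℝ => (gaussianReal w.1 V A).toReal) :=
      (hGmeas.comp measurable_fst).ennreal_toReal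
    have hmeas2 : Measurable (fun w : ℝ × ℝ => (gaussianReal w.2 V A).toReal) :=
      (hGmeas.comp measurable_snd).ennreal_toReal
    have hbd : ∀ x : ℝ, ‖(gaussianReal x V A).toReal‖ ≤ 1 := by
      intro x
      rw [Real.norm_eq_abs, abs_of_nonneg ENNReal.toReal_nonneg]
      have h1 := prob_le_one (μ := gaussianReal x V) (s := A)
      simpa using ENNReal.toReal_mono ENNReal.one_ne_top h1
    have hint1 : Integrable (fun w : ℝ × ℝ => (gaussianReal w.1 V A).toReal) ν :=
      ⟨hmeas1.aestronglyMeasurable,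
        HasFiniteIntegral.of_bounded (C := 1) (ae_of_all _ fun w => hbd w.1)⟩
    have hint2 : Integrable (fun w : ℝ × ℝ => (gaussianReal w.2 V A).toReal) ν :=
      ⟨hmeas2.aestronglyMeasurable,
        HasFiniteIntegral.of_bounded (C := 1) (ae_of_all _ fun w => hbd w.2)⟩
    have hto1 : ((P.map (fun ω => X ω + Z ω)) A).toReal
        = ∫ w, (gaussianReal w.1 V A).toReal ∂ν := by
      rw [show (fun ω => X ω + Z ω) = (fun ω => Prod.fst (W ω) + Z ω) from rfl,
        rep Prod.fst measurable_fst,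
        ← integral_toReal (f := fun w : ℝ × ℝ => gaussianReal w.1 V A)
          ((hGmeas.comp measurable_fst).aemeasurable)
          (ae_of_all _ fun w => measure_lt_top _ _)]
    have hto2 : ((P.map (fun ω => Y ω + Z ω)) A).toReal
        = ∫ w, (gaussianReal w.2 V A).toReal ∂ν := by
      rw [show (fun ω => Y ω + Z ω) = (fun ω => Prod.snd (W ω) + Z ω) from rfl,
        rep Prod.snd measurable_snd,
        ← integral_toReal (f := fun w : ℝ × ℝ => gaussianReal w.2 V A)
          ((hGmeas.comp measurable_snd).aemeasurable)
          (ae_of_all _ fun w => measure_lt_top _ _)]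
    rw [hto1, hto2, ← integral_sub hint1 hint2]
    calc |∫ w, ((gaussianReal w.1 V A).toReal - (gaussianReal w.2 V A).toReal) ∂ν|
        ≤ ∫ w, |(gaussianReal w.1 V A).toReal - (gaussianReal w.2 V A).toReal| ∂ν :=
          by simpa [Real.norm_eq_abs] using
            norm_integral_le_integral_norm (μ := ν)
              (fun w : ℝ × ℝ => (gaussianReal w.1 V A).toReal - (gaussianReal w.2 V A).toReal)
      _ ≤ ∫ w, |w.1 - w.2| * c ∂ν := by
          refine integral_mono (hint1.sub hint2).abs (hXYν.mul_const c) fun w => ?_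
          exact gauss_diff_abs hV w.1 w.2 hA
      _ = (∫ w, |w.1 - w.2| ∂ν) * c := integral_mul_const c _
      _ = c * ∫ ω, |X ω - Y ω| ∂P := by rw [hXYeq, mul_comm]
  rw [tvDist, ← hc]
  haveI : Nonempty {s : Set ℝ // MeasurableSet s} := ⟨⟨∅, MeasurableSet.empty⟩⟩
  exact ciSup_le fun A => key A.1 A.2
end
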